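/- arXiv:2506.18782 — 11 statements merged into one kernel-verified Lean document; each statement's English description precedes it below -/
import Mathlib

section
/- Let r be a positive even integer, let p be a prime with p ∤ r, and let m > r be an integer. Set n = m·p. Then there exists a set S of vertices of the n-dimensional hypercube with |S| = 2^(m + p − 1) such that no two distinct elements of S have Hamming distance exactly r (i.e., S is an independent set in the r-distance graph of the hypercube). -/
/-- For a positive even `r`, a prime `p` not dividing `r`, and `m > r`,
with `n = m * p`, there is an independent set of size `2^(m+p-1)` in the `r`-distance
graph of the `n`-dimensional hypercube. -/
theorem exists_large_independent_set_in_distance_graph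
    (r p m n : ℕ) (hr : 0 < r) (hre : Even r) (hp : p.Prime) (hpr : ¬ p ∣ r)
    (hm : r < m) (hn : n = m * p) :
    ∃ S : Finset (Fin n → Bool),
      S.card = 2 ^ (m + p - 1) ∧
      ∀ u ∈ S, ∀ v ∈ S, u ≠ v → hammingDist u v ≠ r := by
  have hp0 : 0 < p := hp.pos
  have hm0 : 0 < m := lt_of_le_of_lt (Nat.zero_le r) hm
  set j0 : Fin p := ⟨0, hp0⟩ with hj0
  set i0 : Fin m := ⟨0, hm0⟩ with hi0
  let e : Fin n ≃ Fin m × Fin p := (finCongr hn).trans finProdFinEquiv.symm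
  let A : ({j : Fin p // j ≠ j0} → Bool) → Fin p → Bool :=
    fun a j => if h : j = j0 then false else a ⟨j, h⟩
  let g : ({j : Fin p // j ≠ j0} → Bool) × (Fin m → Bool) → (Fin n → Bool) :=
    fun ab k => xor (A ab.1 (e k).2) (ab.2 (e k).1)
  have hginj : Function.Injective g := by
    intro ⟨a, b⟩ ⟨a', b'⟩ h
    have hk : ∀ i j, xor (A a j) (b i) = xor (A a' j) (b' i) := by
      intro i j
      have := congrFun h (e.symm (i, j))
      simpa [g] using this
    have hb : b = b' := by
      funext i
      have := hk i j0
      simpa [A] using this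
    have ha : a = a' := by
      funext j
      have := hk i0 j.1
      rw [hb] at this
      have h2 : A a j.1 = A a' j.1 := by
        cases h3 : b' i0 <;> simp [h3] at this <;> simpa using this
      simpa [A, j.2] using h2
    simp [ha, hb]
  refine ⟨Finset.image g Finset.univ, ?_, ?_⟩
  · rw [Finset.card_image_of_injective _ hginj, Finset.card_univ, Fintype.card_prod,
      Fintype.card_fun, Fintype.card_fun, Fintype.card_bool, Fintype.card_fin]
    have hcs : Fintype.card {j : Fin p // j ≠ j0} = p - 1 := by
      rw [Fintype.card_subtype]
      have : Finset.filter (fun j => j ≠ j0) Finset.univ = Finset.univ.erase j0 := by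
        ext j; simp [Finset.mem_erase]
      rw [this, Finset.card_erase_of_mem (Finset.mem_univ _), Finset.card_univ, Fintype.card_fin]
    rw [hcs, ← pow_add]
    congr 1
    omega
  · rintro u hu v hv huv
    simp only [Finset.mem_image, Finset.mem_univ, true_and] at hu hv
    obtain ⟨⟨a, b⟩, rfl⟩ := hu
    obtain ⟨⟨a', b'⟩, rfl⟩ := hv
    set c : Fin p → Bool := fun j => xor (A a j) (A a' j) with hc
    set d : Fin m → Bool := fun i => xor (b i) (b' i) with hd
    set s := (Finset.univ.filter (fun j => c j = true)).card with hs
    set t := (Finset.univ.filter (fun i => d i = true)).card with ht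
    have hcompl : (Finset.univ.filter (fun j => ¬ c j = true)).card = p - s := by
      have := Finset.card_filter_add_card_filter_not
        (s := (Finset.univ : Finset (Fin p))) (fun j => c j = true)
      rw [Finset.card_univ, Fintype.card_fin] at this
      omega
    have hdist : hammingDist (g (a, b)) (g (a', b')) = t * (p - s) + (m - t) * s := by
      have hbool : ∀ w x y z : Bool, ((xor w x) ≠ (xor y z)) = ((xor w y) ≠ (xor x z)) := by
        decide
      have h1 : hammingDist (g (a, b)) (g (a', b'))
          = (Finset.univ.filter (fun z : Fin m × Fin p => c z.2 ≠ d z.1)).card := by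
        show (Finset.univ.filter fun k => g (a,b) k ≠ g (a',b') k).card = _
        rw [Finset.card_filter, Finset.card_filter, ← Equiv.sum_comp e.symm]
        apply Finset.sum_congr rfl
        intro z _
        congr 1
        simp only [g, Equiv.apply_symm_apply, hc, hd]
        exact hbool _ _ _ _
      rw [h1, Finset.card_filter, Fintype.sum_prod_type]
      have hinner : ∀ i : Fin m, (∑ j : Fin p, if c j ≠ d i then 1 else 0)
          = if d i = true then p - s else s := by
        intro i
        cases hdi : d i with
        | false =>
          rw [if_neg (by simp)]
          rw [← Finset.card_filter, hs]
          congr 1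
          ext j
          simp [hdi]
        | true =>
          rw [if_pos rfl, ← Finset.card_filter, ← hcompl]
      rw [Finset.sum_congr rfl (fun i _ => hinner i)]
      rw [← Finset.sum_filter_add_sum_filter_not Finset.univ (fun i => d i = true)]
      rw [Finset.sum_congr rfl (fun i hi => if_pos (Finset.mem_filter.mp hi).2),
        Finset.sum_congr rfl (fun i hi => if_neg (Finset.mem_filter.mp hi).2),
        Finset.sum_const, Finset.sum_const, smul_eq_mul, smul_eq_mul, ← ht]
      congr 2
      have := Finset.card_filter_add_card_filter_not
        (s := (Finset.univ : Finset (Fin m))) (fun i => d i = true)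
      rw [Finset.card_univ, Fintype.card_fin] at this
      omega
    have hsle : s ≤ p - 1 := by
      have hsub : Finset.filter (fun j => c j = true) Finset.univ ⊆ Finset.univ.erase j0 := by
        intro j hj
        simp only [Finset.mem_filter] at hj
        rw [Finset.mem_erase]
        refine ⟨?_, Finset.mem_univ _⟩
        rintro rfl
        simp [hc, A] at hj
      calc s ≤ (Finset.univ.erase j0).card := Finset.card_le_card hsub
        _ = p - 1 := by
          rw [Finset.card_erase_of_mem (Finset.mem_univ _), Finset.card_univ, Fintype.card_fin]
    have htle : t ≤ m := by
      calc t ≤ (Finset.univ : Finset (Fin m)).card :=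
            Finset.card_le_card (Finset.filter_subset _ _)
        _ = m := by rw [Finset.card_univ, Fintype.card_fin]
    have hst : ¬ (s = 0 ∧ t = 0) := by
      rintro ⟨hs0, ht0⟩
      apply huv
      have hcz : ∀ j, c j = false := by
        intro j
        by_contra h
        rw [Bool.not_eq_false] at h
        have hmem : j ∈ Finset.filter (fun j => c j = true) Finset.univ := by
          simp [h]
        have := Finset.card_pos.mpr ⟨j, hmem⟩
        omega
      have hdz : ∀ i, d i = false := by
        intro i
        by_contra h
        rw [Bool.not_eq_false] at h
        have hmem : i ∈ Finset.filter (fun i => d i = true) Finset.univ := by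
          simp [h]
        have := Finset.card_pos.mpr ⟨i, hmem⟩
        omega
      have ha : a = a' := by
        funext j
        have := hcz j.1
        simp only [hc] at this
        have h2 : A a j.1 = A a' j.1 := by
          revert this
          cases A a j.1 <;> cases A a' j.1 <;> decide
        simpa [A, j.2] using h2
      have hb : b = b' := by
        funext i
        have := hdz i
        simp only [hd] at this
        revert this
        cases b i <;> cases b' i <;> decide
      rw [ha, hb]
    rw [hdist]
    intro heq
    rcases Nat.eq_zero_or_pos s with hs0 | hs1
    · have ht1 : 1 ≤ t := by
        rcases Nat.eq_zero_or_pos t with ht0 | h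
        · exact absurd ⟨hs0, ht0⟩ hst
        · exact h
      rw [hs0] at heq
      simp at heq
      exact hpr (heq ▸ dvd_mul_left p t)
    · have hps : 1 ≤ p - s := by omega
      have h1 : t * 1 ≤ t * (p - s) := Nat.mul_le_mul_left t hps
      have h2 : (m - t) * 1 ≤ (m - t) * s := Nat.mul_le_mul_left (m - t) hs1
      omega
end

section
/- Let n be a positive integer and let r be a positive even integer with 3r ≤ 2n. Then there exists a triangle-free subset S of the r-distance graph of the n-dimensional hypercube with |S| ≥ (2√2/3) · 2^n / √(C(n,r) · C(r,r/2) · C(n−r,r/2)), where C(a,b) denotes the binomial coefficient. -/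
open Finset

variable {α : Type*} [DecidableEq α]

lemma weight_sum_one (p : ℝ) (u : Finset α) :
    ∑ S ∈ u.powerset, p ^ S.card * (1 - p) ^ (u.card - S.card) = 1 := by
  have h := Finset.prod_add (fun _ : α => p) (fun _ : α => (1 : ℝ) - p) u
  simp only [add_sub_cancel, prod_const, one_pow, prod_const_one] at h
  refine Eq.trans ?_ h.symm
  apply Finset.sum_congr rfl
  intro S hS
  rw [mem_powerset] at hS
  rw [card_sdiff_of_subset hS]

lemma weight_sum_superset (p : ℝ) (t u : Finset α) (h : t ⊆ u) :
    ∑ S ∈ u.powerset.filter (fun S => t ⊆ S), p ^ S.card * (1 - p) ^ (u.card - S.card)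
      = p ^ t.card := by
  have key : ∑ S ∈ u.powerset.filter (fun S => t ⊆ S), p ^ S.card * (1 - p) ^ (u.card - S.card)
      = ∑ S' ∈ (u \ t).powerset, p ^ t.card * (p ^ S'.card * (1 - p) ^ ((u \ t).card - S'.card)) := by
    refine Finset.sum_nbij' (fun S => S \ t) (fun S' => S' ∪ t) ?_ ?_ ?_ ?_ ?_
    · intro S hS
      simp only [mem_filter, mem_powerset] at hS
      exact mem_powerset.2 (sdiff_subset_sdiff hS.1 Subset.rfl)
    · intro S' hS'
      rw [mem_powerset] at hS'
      exact mem_filter.2 ⟨mem_powerset.2 (union_subset (hS'.trans sdiff_subset) h),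
        subset_union_right⟩
    · intro S hS
      simp only [mem_filter, mem_powerset] at hS
      exact sdiff_union_of_subset hS.2
    · intro S' hS'
      rw [mem_powerset] at hS'
      have hd : Disjoint S' t := disjoint_of_subset_left hS' sdiff_disjoint
      show (S' ∪ t) \ t = S'
      rw [union_sdiff_right, sdiff_eq_self_of_disjoint hd]
    · intro S hS
      simp only [mem_filter, mem_powerset] at hS
      obtain ⟨hSu, htS⟩ := hS
      have h1 : (S \ t).card + t.card = S.card := card_sdiff_add_card_eq_card htS
      have h2 : t.card ≤ S.card := card_le_card htS
      have h3 : S.card ≤ u.card := card_le_card hSu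
      have h4 : (u \ t).card = u.card - t.card := card_sdiff_of_subset h
      show p ^ S.card * (1 - p) ^ (u.card - S.card)
        = p ^ t.card * (p ^ (S \ t).card * (1 - p) ^ ((u \ t).card - (S \ t).card))
      rw [← h1, pow_add, show u.card - ((S \ t).card + t.card) = (u \ t).card - (S \ t).card by
        omega]
      ring
  rw [key, ← mul_sum, weight_sum_one, mul_one]

lemma weight_expect_count (p : ℝ) (u : Finset α) (F : Finset (Finset α))
    (hF : ∀ t ∈ F, t ⊆ u) :
    ∑ S ∈ u.powerset,
        (p ^ S.card * (1 - p) ^ (u.card - S.card)) * ((F.filter (fun t => t ⊆ S)).card : ℝ)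
      = ∑ t ∈ F, p ^ t.card := by
  have step1 : ∀ S : Finset α,
      (p ^ S.card * (1 - p) ^ (u.card - S.card)) * ((F.filter (fun t => t ⊆ S)).card : ℝ)
      = ∑ t ∈ F, (if t ⊆ S then p ^ S.card * (1 - p) ^ (u.card - S.card) else 0) := by
    intro S
    rw [← Finset.sum_boole, mul_sum]
    apply Finset.sum_congr rfl
    intro t _
    split <;> simp
  simp_rw [step1]
  rw [Finset.sum_comm]
  apply Finset.sum_congr rfl
  intro t ht
  rw [← Finset.sum_filter]
  exact weight_sum_superset p t u (hF t ht)

lemma exists_ge_weighted (p : ℝ) (hp0 : 0 ≤ p) (hp1 : p ≤ 1) (u : Finset α)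
    (f : Finset α → ℝ) (c : ℝ)
    (hc : ∑ S ∈ u.powerset, (p ^ S.card * (1 - p) ^ (u.card - S.card)) * f S = c) :
    ∃ S ∈ u.powerset, c ≤ f S := by
  obtain ⟨b, hb, hmax⟩ := Finset.exists_max_image u.powerset f ⟨u, mem_powerset_self u⟩
  refine ⟨b, hb, ?_⟩
  have hw : ∀ S : Finset α, 0 ≤ p ^ S.card * (1 - p) ^ (u.card - S.card) := fun S =>
    mul_nonneg (pow_nonneg hp0 _) (pow_nonneg (by linarith) _)
  calc c = ∑ S ∈ u.powerset, (p ^ S.card * (1 - p) ^ (u.card - S.card)) * f S := hc.symm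
    _ ≤ ∑ S ∈ u.powerset, (p ^ S.card * (1 - p) ^ (u.card - S.card)) * f b := by
        apply Finset.sum_le_sum
        intro S hS
        exact mul_le_mul_of_nonneg_left (hmax S hS) (hw S)
    _ = (∑ S ∈ u.powerset, p ^ S.card * (1 - p) ^ (u.card - S.card)) * f b := by
        rw [Finset.sum_mul]
    _ = f b := by rw [weight_sum_one p u, one_mul]

variable {n : ℕ}

def dd (u v : Fin n → Bool) : Finset (Fin n) := univ.filter (fun i => u i ≠ v i)

lemma hammingDist_eq_dd (u v : Fin n → Bool) : hammingDist u v = (dd u v).card := rfl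

lemma dd_symmDiff (u v w : Fin n → Bool) :
    dd v w = (dd u v \ dd u w) ∪ (dd u w \ dd u v) := by
  ext i
  simp only [dd, mem_union, mem_sdiff, mem_filter, mem_univ, true_and]
  cases u i <;> cases v i <;> cases w i <;> simp

lemma recover (u v : Fin n → Bool) (i : Fin n) :
    v i = if i ∈ dd u v then !(u i) else u i := by
  simp only [dd, mem_filter, mem_univ, true_and]
  cases u i <;> cases v i <;> simp

lemma tri_struct {r : ℕ} (hre : Even r) {u v w : Fin n → Bool}
    (huv : hammingDist u v = r) (huw : hammingDist u w = r) (hvw : hammingDist v w = r) :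
    (dd u v).card = r ∧ (dd u v ∩ dd u w).card = r / 2 ∧
      (dd u w \ dd u v).card = r / 2 ∧ dd u w = (dd u v ∩ dd u w) ∪ (dd u w \ dd u v) := by
  rw [hammingDist_eq_dd] at huv huw hvw
  obtain ⟨m, hm⟩ := hre
  have h1 : (dd v w).card = (dd u v \ dd u w).card + (dd u w \ dd u v).card := by
    rw [dd_symmDiff u v w]
    exact card_union_of_disjoint (disjoint_sdiff_sdiff)
  have h2 : (dd u v \ dd u w).card + (dd u v ∩ dd u w).card = (dd u v).card :=
    card_sdiff_add_card_inter _ _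
  have h3 : (dd u w \ dd u v).card + (dd u w ∩ dd u v).card = (dd u w).card :=
    card_sdiff_add_card_inter _ _
  have h4 : dd u w ∩ dd u v = dd u v ∩ dd u w := inter_comm _ _
  rw [h4] at h3
  have h5 : dd u w = (dd u v ∩ dd u w) ∪ (dd u w \ dd u v) := by
    ext i; simp only [mem_union, mem_inter, mem_sdiff]; tauto
  refine ⟨huv, by omega, by omega, h5⟩

def TO (n r : ℕ) : Finset ((Fin n → Bool) × (Fin n → Bool) × (Fin n → Bool)) :=
  (univ ×ˢ univ ×ˢ univ).filter (fun t => t.1 ≠ t.2.1 ∧ t.1 ≠ t.2.2 ∧ t.2.1 ≠ t.2.2 ∧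
    hammingDist t.1 t.2.1 = r ∧ hammingDist t.1 t.2.2 = r ∧ hammingDist t.2.1 t.2.2 = r)

def TV (n r : ℕ) : Finset (Finset (Fin n → Bool)) :=
  ((univ : Finset (Fin n → Bool)).powersetCard 3).filter
    (fun t => ∀ x ∈ t, ∀ y ∈ t, x ≠ y → hammingDist x y = r)

lemma TO_card_le {r : ℕ} (hre : Even r) :
    (TO n r).card ≤ 2 ^ n * (n.choose r * r.choose (r / 2) * (n - r).choose (r / 2)) := by
  classical
  set T := (univ : Finset (Fin n → Bool)) ×ˢ
      (((univ : Finset (Fin n)).powersetCard r).sigma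
        (fun A => (A.powersetCard (r / 2)) ×ˢ ((Aᶜ).powersetCard (r / 2)))) with hT
  have hcard : T.card = 2 ^ n * (n.choose r * r.choose (r / 2) * (n - r).choose (r / 2)) := by
    rw [hT, card_product, card_sigma]
    have h1 : ((univ : Finset (Fin n → Bool))).card = 2 ^ n := by
      simp [card_univ]
    have h2 : ∀ A ∈ (univ : Finset (Fin n)).powersetCard r,
        ((A.powersetCard (r / 2)) ×ˢ ((Aᶜ).powersetCard (r / 2))).card
          = r.choose (r / 2) * (n - r).choose (r / 2) := by
      intro A hA
      rw [mem_powersetCard] at hA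
      rw [card_product, card_powersetCard, card_powersetCard, hA.2, card_compl, hA.2,
        Fintype.card_fin]
    rw [Finset.sum_congr rfl h2, sum_const, smul_eq_mul, card_powersetCard]
    simp only [Finset.card_univ, Fintype.card_fun, Fintype.card_fin, Fintype.card_bool]
    ring
  rw [← hcard]
  apply Finset.card_le_card_of_injOn
    (fun t => (t.1, ⟨dd t.1 t.2.1, (dd t.1 t.2.1 ∩ dd t.1 t.2.2, dd t.1 t.2.2 \ dd t.1 t.2.1)⟩))
  · intro t ht
    simp only [TO, mem_coe, mem_filter, mem_product, mem_univ, true_and] at ht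
    obtain ⟨h12, h13, h23, d12, d13, d23⟩ := ht
    obtain ⟨c1, c2, c3, _⟩ := tri_struct hre d12 d13 d23
    simp only [hT, mem_coe, mem_product, mem_univ, true_and, Finset.mem_sigma, mem_powersetCard]
    refine ⟨⟨subset_univ _, c1⟩, ⟨inter_subset_left, c2⟩, ⟨?_, c3⟩⟩
    intro i hi
    rw [mem_sdiff] at hi
    rw [mem_compl]
    exact hi.2
  · intro t ht t' ht' heq
    simp only [TO, coe_filter, Set.mem_setOf_eq, mem_coe, mem_filter, mem_product, mem_univ,
      true_and] at ht ht'
    obtain ⟨h12, h13, h23, d12, d13, d23⟩ := ht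
    obtain ⟨h12', h13', h23', d12', d13', d23'⟩ := ht'
    obtain ⟨-, -, -, hw⟩ := tri_struct hre d12 d13 d23
    obtain ⟨-, -, -, hw'⟩ := tri_struct hre d12' d13' d23'
    simp only [Prod.ext_iff, Sigma.ext_iff, heq_eq_eq] at heq
    obtain ⟨e1, eA, eB, eC⟩ := heq
    have ev : t.2.1 = t'.2.1 := by
      funext i
      rw [recover t.1 t.2.1 i, recover t'.1 t'.2.1 i, eA, e1]
    have ew : t.2.2 = t'.2.2 := by
      have hdd : dd t.1 t.2.2 = dd t'.1 t'.2.2 := by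
        rw [hw, eB, eC, ← hw']
      funext i
      rw [recover t.1 t.2.2 i, recover t'.1 t'.2.2 i, hdd, e1]
    exact Prod.ext e1 (Prod.ext ev ew)

set_option maxHeartbeats 1600000 in
lemma six_TV_le (n r : ℕ) : 6 * (TV n r).card ≤ (TO n r).card := by
  classical
  have hmap : ∀ t ∈ TO n r, ({t.1, t.2.1, t.2.2} : Finset (Fin n → Bool)) ∈ TV n r := by
    intro t ht
    simp only [TO, mem_filter, mem_product, mem_univ, true_and] at ht
    obtain ⟨h12, h13, h23, d12, d13, d23⟩ := ht
    simp only [TV, mem_filter, mem_powersetCard]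
    refine ⟨⟨subset_univ _, ?_⟩, ?_⟩
    · rw [card_insert_of_notMem (by simp [h12, h13]), card_insert_of_notMem (by simp [h23]),
        card_singleton]
    · intro x hx y hy hxy
      simp only [mem_insert, mem_singleton] at hx hy
      rcases hx with rfl | rfl | rfl <;> rcases hy with rfl | rfl | rfl <;>
        first
          | exact absurd rfl hxy
          | assumption
          | (rw [hammingDist_comm]; assumption)
  rw [Finset.card_eq_sum_card_fiberwise hmap]
  have h6 : ∀ y ∈ TV n r,
      6 ≤ ((TO n r).filter (fun t => ({t.1, t.2.1, t.2.2} : Finset (Fin n → Bool)) = y)).card := by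
    intro y hy
    have hy' := hy
    simp only [TV, mem_filter, mem_powersetCard] at hy'
    obtain ⟨⟨-, hc3⟩, hpair⟩ := hy'
    obtain ⟨a, b, c, hab, hac, hbc, rfl⟩ := Finset.card_eq_three.1 hc3
    have ha : a ∈ ({a, b, c} : Finset (Fin n → Bool)) := by simp
    have hb : b ∈ ({a, b, c} : Finset (Fin n → Bool)) := by simp
    have hc : c ∈ ({a, b, c} : Finset (Fin n → Bool)) := by simp
    have dab := hpair a ha b hb hab
    have dac := hpair a ha c hc hac
    have dbc := hpair b hb c hc hbc
    have dba := hpair b hb a ha hab.symm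
    have dca := hpair c hc a ha hac.symm
    have dcb := hpair c hc b hb hbc.symm
    have hba := hab.symm
    have hca := hac.symm
    have hcb := hbc.symm
    set F := (TO n r).filter
      (fun t => ({t.1, t.2.1, t.2.2} : Finset (Fin n → Bool)) = {a, b, c}) with hF
    set E : Finset ((Fin n → Bool) × (Fin n → Bool) × (Fin n → Bool)) :=
      {(a, b, c), (a, c, b), (b, a, c), (b, c, a), (c, a, b), (c, b, a)} with hE
    have hEF : E ⊆ F := by
      intro x hx
      rw [hE] at hx
      simp only [mem_insert, mem_singleton] at hx
      have hTOmem : ∀ u v w : Fin n → Bool, u ≠ v → u ≠ w → v ≠ w →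
          hammingDist u v = r → hammingDist u w = r → hammingDist v w = r →
          ({u, v, w} : Finset (Fin n → Bool)) = {a, b, c} → (u, v, w) ∈ F := by
        intro u v w q1 q2 q3 q4 q5 q6 q7
        rw [hF, mem_filter]
        refine ⟨?_, q7⟩
        simp only [TO, mem_filter, mem_product, mem_univ, true_and]
        exact ⟨q1, q2, q3, q4, q5, q6⟩
      rcases hx with rfl | rfl | rfl | rfl | rfl | rfl
      · exact hTOmem a b c hab hac hbc dab dac dbc rfl
      · exact hTOmem a c b hac hab hcb dac dab dcb
          (by ext u; simp only [mem_insert, mem_singleton]; tauto)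
      · exact hTOmem b a c hba hbc hac dba dbc dac
          (by ext u; simp only [mem_insert, mem_singleton]; tauto)
      · exact hTOmem b c a hbc hba hca dbc dba dca
          (by ext u; simp only [mem_insert, mem_singleton]; tauto)
      · exact hTOmem c a b hca hcb hab dca dcb dab
          (by ext u; simp only [mem_insert, mem_singleton]; tauto)
      · exact hTOmem c b a hcb hca hba dcb dca dba
          (by ext u; simp only [mem_insert, mem_singleton]; tauto)
    have hEcard : E.card = 6 := by
      rw [hE]
      rw [card_insert_of_notMem (by simp [Prod.ext_iff, hab, hac, hbc]),
        card_insert_of_notMem (by simp [Prod.ext_iff, hab, hac, hbc]),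
        card_insert_of_notMem (by simp [Prod.ext_iff, hab, hac, hbc]),
        card_insert_of_notMem (by simp [Prod.ext_iff, hab, hac, hbc]),
        card_insert_of_notMem (by simp [Prod.ext_iff, hab, hac, hbc]), card_singleton]
    calc (6 : ℕ) = E.card := hEcard.symm
      _ ≤ F.card := card_le_card hEF
  calc 6 * (TV n r).card = ∑ _y ∈ TV n r, 6 := by rw [sum_const, smul_eq_mul]; ring
    _ ≤ _ := Finset.sum_le_sum h6


noncomputable def idx (n : ℕ) (f : Fin n → Bool) : ℕ := (Fintype.equivFin (Fin n → Bool) f : ℕ)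

lemma idx_inj {n : ℕ} {u v : Fin n → Bool} (h : idx n u = idx n v) : u = v :=
  (Fintype.equivFin (Fin n → Bool)).injective (Fin.val_injective h)

set_option maxHeartbeats 1600000 in
/-- probabilistic lower bound for triangle-free subsets of the
`r`-distance graph of the hypercube. -/
theorem exists_triangle_free_subset_lower_bound
    (n r : ℕ) (hn : 0 < n) (hr : 0 < r) (hre : Even r) (hrn : 3 * r ≤ 2 * n) :
    ∃ S : Finset (Fin n → Bool),
      (∀ u ∈ S, ∀ v ∈ S, ∀ w ∈ S, u ≠ v → u ≠ w → v ≠ w →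
        ¬(hammingDist u v = r ∧ hammingDist u w = r ∧ hammingDist v w = r)) ∧
      (S.card : ℝ) ≥ (2 * Real.sqrt 2 / 3) * 2 ^ n /
        Real.sqrt ((n.choose r) * (r.choose (r / 2)) * ((n - r).choose (r / 2))) := by
  classical
  obtain ⟨m, hm⟩ := hre
  have hrn' : r ≤ n := by omega
  have hr2 : r / 2 ≤ n - r := by omega
  -- the vertex-count quantity
  set tvn : ℕ := n.choose r * r.choose (r / 2) * (n - r).choose (r / 2) with htvn
  have htv2n : 2 ≤ tvn := by
    have h1 : 1 ≤ n.choose r := Nat.choose_pos hrn'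
    have h2 : 2 ≤ r.choose (r / 2) := by
      have := Nat.choose_le_middle 1 r
      have hr1 : r.choose 1 = r := Nat.choose_one_right r
      omega
    have h3 : 1 ≤ (n - r).choose (r / 2) := Nat.choose_pos hr2
    calc 2 ≤ 1 * 2 * 1 := by norm_num
      _ ≤ n.choose r * r.choose (r / 2) * (n - r).choose (r / 2) :=
        Nat.mul_le_mul (Nat.mul_le_mul h1 h2) h3
  set tv : ℝ := (tvn : ℝ) with htv
  have htv2 : (2 : ℝ) ≤ tv := by rw [htv]; exact_mod_cast htv2n
  have htv0 : (0 : ℝ) < tv := by linarith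
  have hst0 : (0 : ℝ) < Real.sqrt tv := Real.sqrt_pos.2 htv0
  set p : ℝ := Real.sqrt 2 / Real.sqrt tv with hp
  have hp0 : 0 ≤ p := div_nonneg (Real.sqrt_nonneg _) (Real.sqrt_nonneg _)
  have hp1 : p ≤ 1 := by
    rw [hp, div_le_one hst0]
    exact Real.sqrt_le_sqrt htv2
  have hp2 : p ^ 2 = 2 / tv := by
    rw [hp, div_pow, Real.sq_sqrt (by norm_num : (0:ℝ) ≤ 2), Real.sq_sqrt htv0.le]
  set V : Finset (Fin n → Bool) := univ with hV
  set N : ℝ := ((2 : ℝ) ^ n) with hN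
  have hVcard : (V.card : ℝ) = N := by
    rw [hV, hN, card_univ]
    simp [Fintype.card_fun]
  -- expectation of size
  have Esize : ∑ S ∈ V.powerset,
      (p ^ S.card * (1 - p) ^ (V.card - S.card)) * (S.card : ℝ) = N * p := by
    have himg : ∀ S ∈ V.powerset,
        ((V.image (fun x => ({x} : Finset (Fin n → Bool)))).filter (fun t => t ⊆ S)).card
          = S.card := by
      intro S hS
      have : (V.image (fun x => ({x} : Finset (Fin n → Bool)))).filter (fun t => t ⊆ S)
          = S.image (fun x => ({x} : Finset (Fin n → Bool))) := by
        ext t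
        simp only [mem_filter, mem_image]
        constructor
        · rintro ⟨⟨x, -, rfl⟩, hsub⟩
          exact ⟨x, singleton_subset_iff.1 hsub, rfl⟩
        · rintro ⟨x, hx, rfl⟩
          exact ⟨⟨x, mem_univ x, rfl⟩, singleton_subset_iff.2 hx⟩
      rw [this, card_image_of_injective _ Finset.singleton_injective]
    calc ∑ S ∈ V.powerset, (p ^ S.card * (1 - p) ^ (V.card - S.card)) * (S.card : ℝ)
        = ∑ S ∈ V.powerset, (p ^ S.card * (1 - p) ^ (V.card - S.card)) *
            (((V.image (fun x => ({x} : Finset (Fin n → Bool)))).filter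
              (fun t => t ⊆ S)).card : ℝ) := by
          apply Finset.sum_congr rfl
          intro S hS
          rw [himg S hS]
      _ = ∑ t ∈ V.image (fun x => ({x} : Finset (Fin n → Bool))), p ^ t.card := by
          apply weight_expect_count
          intro t ht
          exact subset_univ t
      _ = ∑ x ∈ V, p ^ ({x} : Finset (Fin n → Bool)).card :=
          (Finset.sum_image (fun x _ y _ h => Finset.singleton_injective h))
      _ = N * p := by
          simp only [card_singleton, pow_one, sum_const, nsmul_eq_mul]
          rw [hVcard]
  -- expectation of triangle count
  have Etri : ∑ S ∈ V.powerset,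
      (p ^ S.card * (1 - p) ^ (V.card - S.card)) *
        (((TV n r).filter (fun t => t ⊆ S)).card : ℝ) = ((TV n r).card : ℝ) * p ^ 3 := by
    rw [weight_expect_count p V (TV n r) (fun t _ => subset_univ t)]
    have : ∀ t ∈ TV n r, p ^ t.card = p ^ 3 := by
      intro t ht
      simp only [TV, mem_filter, mem_powersetCard] at ht
      rw [ht.1.2]
    rw [Finset.sum_congr rfl this, sum_const, nsmul_eq_mul]
  -- the combined expectation
  have Ecomb : ∑ S ∈ V.powerset,
      (p ^ S.card * (1 - p) ^ (V.card - S.card)) *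
        ((S.card : ℝ) - (((TV n r).filter (fun t => t ⊆ S)).card : ℝ))
      = N * p - ((TV n r).card : ℝ) * p ^ 3 := by
    rw [← Esize, ← Etri, ← Finset.sum_sub_distrib]
    apply Finset.sum_congr rfl
    intro S _
    ring
  obtain ⟨S, hSV, hSgood⟩ := exists_ge_weighted p hp0 hp1 V
    (fun S => (S.card : ℝ) - (((TV n r).filter (fun t => t ⊆ S)).card : ℝ)) _ Ecomb
  rw [mem_powerset] at hSV
  -- deletion: remove the minimal vertex of each triangle
  set B : Finset (Fin n → Bool) := S.filter (fun u => ∃ t ∈ TV n r, t ⊆ S ∧ u ∈ t ∧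
    ∀ x ∈ t, idx n u ≤ idx n x) with hB
  have hBS : B ⊆ S := filter_subset _ _
  refine ⟨S \ B, ?_, ?_⟩
  · -- triangle-free
    intro u hu v hv w hw huv huw hvw
    rintro ⟨d1, d2, d3⟩
    have hmemTV : ({u, v, w} : Finset (Fin n → Bool)) ∈ TV n r := by
      simp only [TV, mem_filter, mem_powersetCard]
      refine ⟨⟨subset_univ _, ?_⟩, ?_⟩
      · rw [card_insert_of_notMem (by simp [huv, huw]),
          card_insert_of_notMem (by simp [hvw]), card_singleton]
      · intro x hx y hy hxy
        simp only [mem_insert, mem_singleton] at hx hy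
        rcases hx with rfl | rfl | rfl <;> rcases hy with rfl | rfl | rfl <;>
          first
            | exact absurd rfl hxy
            | assumption
            | (rw [hammingDist_comm]; assumption)
    have hsubS : ({u, v, w} : Finset (Fin n → Bool)) ⊆ S := by
      intro x hx
      simp only [mem_insert, mem_singleton] at hx
      rcases hx with rfl | rfl | rfl <;>
        exact (mem_sdiff.1 (by assumption)).1
    have hBmem : ∀ z, z ∈ S \ B → z ∈ ({u, v, w} : Finset (Fin n → Bool)) →
        (∀ x ∈ ({u, v, w} : Finset (Fin n → Bool)), idx n z ≤ idx n x) → False := by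
      intro z hz hzm hzmin
      have hzB : z ∈ B := by
        rw [hB, mem_filter]
        exact ⟨(mem_sdiff.1 hz).1, ⟨{u, v, w}, hmemTV, hsubS, hzm, hzmin⟩⟩
      exact (mem_sdiff.1 hz).2 hzB
    have hmu : u ∈ ({u, v, w} : Finset (Fin n → Bool)) := by simp
    have hmv : v ∈ ({u, v, w} : Finset (Fin n → Bool)) := by simp
    have hmw : w ∈ ({u, v, w} : Finset (Fin n → Bool)) := by simp
    by_cases c1 : idx n u ≤ idx n v ∧ idx n u ≤ idx n w
    · refine hBmem u hu hmu ?_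
      intro x hx
      simp only [mem_insert, mem_singleton] at hx
      rcases hx with rfl | rfl | rfl <;> omega
    · have hc := not_and_or.1 c1
      by_cases c2 : idx n v ≤ idx n w
      · refine hBmem v hv hmv ?_
        intro x hx
        simp only [mem_insert, mem_singleton] at hx
        rcases hx with rfl | rfl | rfl <;> rcases hc with hc | hc <;> push_neg at hc <;> omega
      · push_neg at c2
        refine hBmem w hw hmw ?_
        intro x hx
        simp only [mem_insert, mem_singleton] at hx
        rcases hx with rfl | rfl | rfl <;> rcases hc with hc | hc <;> push_neg at hc <;> omega
  · -- size bound
    have hBcard : B.card ≤ ((TV n r).filter (fun t => t ⊆ S)).card := by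
      set g : (Fin n → Bool) → Finset (Fin n → Bool) := fun u =>
        if h : ∃ t, t ∈ TV n r ∧ t ⊆ S ∧ u ∈ t ∧ ∀ x ∈ t, idx n u ≤ idx n x
        then h.choose else ∅ with hg
      have hgspec : ∀ u ∈ B, g u ∈ TV n r ∧ g u ⊆ S ∧ u ∈ g u ∧
          ∀ x ∈ g u, idx n u ≤ idx n x := by
        intro u hu
        rw [hB, mem_filter] at hu
        obtain ⟨-, t, ht1, ht2, ht3, ht4⟩ := hu
        have hex : ∃ t, t ∈ TV n r ∧ t ⊆ S ∧ u ∈ t ∧ ∀ x ∈ t, idx n u ≤ idx n x :=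
          ⟨t, ht1, ht2, ht3, ht4⟩
        rw [hg]
        simp only [dif_pos hex]
        exact hex.choose_spec
      apply Finset.card_le_card_of_injOn g
      · intro u hu
        obtain ⟨h1, h2, -, -⟩ := hgspec u hu
        exact mem_filter.2 ⟨h1, h2⟩
      · intro u hu u' hu' heq
        obtain ⟨-, -, hu1, hu2⟩ := hgspec u (by exact_mod_cast hu)
        obtain ⟨-, -, hu1', hu2'⟩ := hgspec u' (by exact_mod_cast hu')
        have l1 := hu2 u' (heq ▸ hu1')
        have l2 := hu2' u (heq.symm ▸ hu1)
        exact idx_inj (le_antisymm l1 l2)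
    have hcard_sdiff : ((S \ B).card : ℝ) = (S.card : ℝ) - (B.card : ℝ) := by
      rw [card_sdiff_of_subset hBS]
      have := card_le_card hBS
      push_cast [Nat.cast_sub this]
      ring
    have hTVbound : ((TV n r).card : ℝ) ≤ N * tv / 6 := by
      have h1 := six_TV_le n r
      have h2 := TO_card_le (n := n) ⟨m, hm⟩
      have h3 : 6 * (TV n r).card ≤ 2 ^ n * tvn := le_trans h1 h2
      have h4 : (6 : ℝ) * ((TV n r).card : ℝ) ≤ (2 : ℝ) ^ n * tv := by
        rw [htv]
        exact_mod_cast h3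
      rw [hN]
      linarith
    have hfilter_le : (((TV n r).filter (fun t => t ⊆ S)).card : ℝ) ≥ (B.card : ℝ) := by
      exact_mod_cast hBcard
    have hchain : ((S \ B).card : ℝ) ≥ N * p - (N * tv / 6) * p ^ 3 := by
      have hp3 : (0 : ℝ) ≤ p ^ 3 := pow_nonneg hp0 3
      have : N * p - (N * tv / 6) * p ^ 3 ≤ N * p - ((TV n r).card : ℝ) * p ^ 3 := by
        nlinarith [hTVbound, hp3]
      calc ((S \ B).card : ℝ) = (S.card : ℝ) - (B.card : ℝ) := hcard_sdiff
        _ ≥ (S.card : ℝ) - (((TV n r).filter (fun t => t ⊆ S)).card : ℝ) := by linarith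
        _ ≥ N * p - ((TV n r).card : ℝ) * p ^ 3 := hSgood
        _ ≥ N * p - (N * tv / 6) * p ^ 3 := by linarith
    have hval : N * p - (N * tv / 6) * p ^ 3 =
        (2 * Real.sqrt 2 / 3) * 2 ^ n / Real.sqrt tv := by
      have hcube : p ^ 3 = (2 / tv) * p := by
        rw [pow_succ, hp2]
      rw [hcube, hp, hN]
      field_simp
      ring
    have hcastarg : ((n.choose r : ℝ) * (r.choose (r / 2) : ℝ) * ((n - r).choose (r / 2) : ℝ))
        = tv := by
      rw [htv, htvn]
      push_cast
      ring
    rw [ge_iff_le, hcastarg, ← hval]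
    linarith [hchain]
end

section
/- Let r be a positive even integer and n a positive integer. The number of unordered triples {u, v, w} of distinct vertices of the n-dimensional hypercube that are pairwise at Hamming distance exactly r equals (1/6) · 2^n · C(n,r) · C(r,r/2) · C(n−r,r/2), where C(a,b) denotes the binomial coefficient. -/
open Finset

section Aux

variable {n : ℕ}

def dset (u v : Fin n → Bool) : Finset (Fin n) := {i | u i ≠ v i}

lemma hd_eq (u v : Fin n → Bool) : hammingDist u v = (dset u v).card := rfl

lemma dset_symmDiff (u v w : Fin n → Bool) :
    dset v w = symmDiff (dset u v) (dset u w) := by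
  ext i
  simp only [dset, mem_filter, mem_univ, true_and, mem_symmDiff]
  cases u i <;> cases v i <;> cases w i <;> simp

lemma card_filter_dset (u : Fin n → Bool) (P : Finset (Fin n) → Prop) [DecidablePred P] :
    (univ.filter fun w => P (dset u w)).card = (univ.powerset.filter P).card := by
  apply Finset.card_bij' (fun w _ => dset u w)
    (fun S _ => fun i => if i ∈ S then !(u i) else u i)
  · intro w hw
    simp only [mem_filter, mem_powerset] at hw ⊢
    exact ⟨subset_univ _, hw.2⟩
  · intro S hS
    simp only [mem_filter, mem_powerset] at hS ⊢
    refine ⟨mem_univ _, ?_⟩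
    convert hS.2 using 1
    ext i
    simp only [dset, mem_filter, mem_univ, true_and]
    by_cases h : i ∈ S <;> simp [h] <;> cases u i <;> simp
  · intro w hw
    funext i
    simp only [dset, mem_filter, mem_univ, true_and]
    by_cases h : u i = w i
    · simp [h]
    · revert h; cases u i <;> cases w i <;> simp
  · intro S hS
    ext i
    simp only [dset, mem_filter, mem_univ, true_and]
    by_cases h : i ∈ S <;> simp [h] <;> cases u i <;> simp

lemma card_symmDiff_key (S D : Finset (Fin n)) :
    (symmDiff S D).card + 2 * (S ∩ D).card = S.card + D.card := by
  have h1 : (symmDiff S D).card = (S ∪ D).card - (S ∩ D).card := by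
    rw [symmDiff_eq_sup_sdiff_inf]
    exact Finset.card_sdiff_of_subset Finset.inter_subset_union
  have h3 := Finset.card_union_add_card_inter S D
  have h4 : (S ∩ D).card ≤ (S ∪ D).card := Finset.card_le_card Finset.inter_subset_union
  omega

lemma count_S (m : ℕ) (D : Finset (Fin n)) :
    (univ.powerset.filter fun S : Finset (Fin n) => S.card = 2*m ∧ (S ∩ D).card = m).card
      = (D.card.choose m) * ((Dᶜ).card.choose m) := by
  rw [← Finset.card_powersetCard, ← Finset.card_powersetCard, ← Finset.card_product]
  refine Finset.card_bij' (fun S _ => (S ∩ D, S \ D)) (fun p _ => p.1 ∪ p.2) ?_ ?_ ?_ ?_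
  · intro S hS
    simp only [mem_filter, mem_powerset, mem_product, mem_powersetCard] at hS ⊢
    obtain ⟨-, hc, hm⟩ := hS
    have hcs := Finset.card_inter_add_card_sdiff S D
    exact ⟨⟨Finset.inter_subset_right, hm⟩,
      fun a ha => Finset.mem_compl.mpr (Finset.mem_sdiff.mp ha).2, by omega⟩
  · intro p hp
    simp only [mem_filter, mem_powerset, mem_product, mem_powersetCard] at hp ⊢
    obtain ⟨⟨h1, h1c⟩, h2, h2c⟩ := hp
    have hdisj : Disjoint p.1 p.2 :=
      Finset.disjoint_left.mpr fun a ha hb => (Finset.mem_compl.mp (h2 hb)) (h1 ha)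
    have e1 : (p.1 ∪ p.2) ∩ D = p.1 := by
      rw [Finset.union_inter_distrib_right, Finset.inter_eq_left.mpr h1]
      have : p.2 ∩ D = ∅ := by
        rw [← Finset.disjoint_iff_inter_eq_empty]
        exact Finset.disjoint_left.mpr fun a ha => (Finset.mem_compl.mp (h2 ha))
      rw [this, Finset.union_empty]
    refine ⟨subset_univ _, ?_, by rw [e1, h1c]⟩
    rw [Finset.card_union_of_disjoint hdisj, h1c, h2c]; ring
  · intro S hS
    show S ∩ D ∪ S \ D = S
    rw [Finset.union_comm]
    exact Finset.sdiff_union_inter S D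
  · intro p hp
    simp only [mem_product, mem_powersetCard] at hp
    obtain ⟨⟨h1, h1c⟩, h2, h2c⟩ := hp
    have e1 : (p.1 ∪ p.2) ∩ D = p.1 := by
      rw [Finset.union_inter_distrib_right, Finset.inter_eq_left.mpr h1]
      have : p.2 ∩ D = ∅ := by
        rw [← Finset.disjoint_iff_inter_eq_empty]
        exact Finset.disjoint_left.mpr fun a ha => (Finset.mem_compl.mp (h2 ha))
      rw [this, Finset.union_empty]
    have e2 : (p.1 ∪ p.2) \ D = p.2 := by
      ext a
      simp only [Finset.mem_sdiff, Finset.mem_union]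
      constructor
      · rintro ⟨h | h, hnd⟩
        · exact absurd (h1 h) hnd
        · exact h
      · intro h
        exact ⟨Or.inr h, Finset.mem_compl.mp (h2 h)⟩
    simp [e1, e2]

lemma card_filter_prod {α β : Type*} [Fintype α] [Fintype β] [DecidableEq α]
    (P : α × β → Prop) [DecidablePred P] :
    (univ.filter P).card = ∑ a : α, (univ.filter fun b => P (a, b)).card := by
  rw [Finset.card_eq_sum_card_fiberwise (f := fun p => p.1) (t := univ) (fun p _ => mem_univ _)]
  refine Finset.sum_congr rfl fun a _ => ?_
  refine Finset.card_bij' (fun p _ => p.2) (fun b _ => (a, b)) ?_ ?_ ?_ ?_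
  · intro p hp
    simp only [mem_filter, mem_univ, true_and] at hp ⊢
    obtain ⟨h1, h2⟩ := hp
    rwa [← h2, Prod.mk.eta]
  · intro b hb
    simp only [mem_filter, mem_univ, true_and] at hb ⊢
    exact ⟨hb, trivial⟩
  · intro p hp
    simp only [mem_filter, mem_univ, true_and] at hp
    simp [Prod.ext_iff, hp.2]
  · intro b _
    rfl

lemma sphere_card (u : Fin n → Bool) (r : ℕ) :
    (univ.filter fun v => hammingDist u v = r).card = n.choose r := by
  rw [show (univ.filter fun v => hammingDist u v = r)
      = (univ.filter fun v => (dset u v).card = r) from rfl,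
    card_filter_dset u (fun S => S.card = r), ← Finset.powersetCard_eq_filter]
  simp

lemma two_count (m : ℕ) (u v : Fin n → Bool) (huv : hammingDist u v = 2*m) :
    (univ.filter fun w => hammingDist u w = 2*m ∧ hammingDist v w = 2*m).card
      = (2*m).choose m * (n - 2*m).choose m := by
  have hD : (dset u v).card = 2*m := huv
  have key : ∀ w : Fin n → Bool, (hammingDist u w = 2*m ∧ hammingDist v w = 2*m) ↔
      ((dset u w).card = 2*m ∧ ((dset u w) ∩ (dset u v)).card = m) := by
    intro w
    rw [hd_eq u w, hd_eq v w, dset_symmDiff u v w]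
    have hk := card_symmDiff_key (dset u w) (dset u v)
    rw [symmDiff_comm] at hk
    constructor
    · rintro ⟨h1, h2⟩; rw [h1, hD, h2] at hk; omega
    · rintro ⟨h1, h2⟩; rw [h1, hD, h2] at hk; omega
  rw [Finset.filter_congr (fun w _ => by rw [key w]),
    card_filter_dset u (fun S => S.card = 2*m ∧ (S ∩ dset u v).card = m),
    count_S m (dset u v), hD, Finset.card_compl, Fintype.card_fin, hD]

lemma OT_card (m : ℕ) :
    (univ.filter fun p : (Fin n → Bool) × (Fin n → Bool) × (Fin n → Bool) =>
        hammingDist p.1 p.2.1 = 2*m ∧ hammingDist p.1 p.2.2 = 2*m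
          ∧ hammingDist p.2.1 p.2.2 = 2*m).card
      = 2^n * (n.choose (2*m) * ((2*m).choose m * (n - 2*m).choose m)) := by
  rw [card_filter_prod]
  have h1 : ∀ u : Fin n → Bool,
      (univ.filter fun q : (Fin n → Bool) × (Fin n → Bool) =>
        hammingDist u q.1 = 2*m ∧ hammingDist u q.2 = 2*m ∧ hammingDist q.1 q.2 = 2*m).card
      = n.choose (2*m) * ((2*m).choose m * (n - 2*m).choose m) := by
    intro u
    rw [card_filter_prod]
    have h2 : ∀ v : Fin n → Bool,
        (univ.filter fun w => hammingDist u v = 2*m ∧ hammingDist u w = 2*m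
          ∧ hammingDist v w = 2*m).card
        = if hammingDist u v = 2*m then (2*m).choose m * (n - 2*m).choose m else 0 := by
      intro v
      split_ifs with h
      · rw [Finset.filter_congr
            (q := fun w => hammingDist u w = 2*m ∧ hammingDist v w = 2*m) (fun w _ => by
          constructor
          · rintro ⟨-, h1, h2⟩; exact ⟨h1, h2⟩
          · rintro ⟨h1, h2⟩; exact ⟨h, h1, h2⟩)]
        exact two_count m u v h
      · rw [Finset.card_eq_zero, Finset.filter_eq_empty_iff]
        rintro w - ⟨h1, -⟩
        exact h h1
    simp only [h2]
    rw [← Finset.sum_filter, Finset.sum_const, smul_eq_mul, sphere_card]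
  rw [Finset.sum_congr rfl fun u _ => h1 u, Finset.sum_const, smul_eq_mul]
  congr 1
  simp [card_univ]

end Aux

-- t4 content as a lemma
lemma fiber_eq (n m : ℕ) (a b c : Fin n → Bool)
    (dab : hammingDist a b = 2*m) (dac : hammingDist a c = 2*m) (dbc : hammingDist b c = 2*m)
    (dba : hammingDist b a = 2*m) (dca : hammingDist c a = 2*m) (dcb : hammingDist c b = 2*m)
    (hne : ∀ {x y : Fin n → Bool}, hammingDist x y = 2*m → x ≠ y) :
    (univ.filter (fun p : (Fin n → Bool) × (Fin n → Bool) × (Fin n → Bool) =>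
        hammingDist p.1 p.2.1 = 2*m ∧ hammingDist p.1 p.2.2 = 2*m
          ∧ hammingDist p.2.1 p.2.2 = 2*m)).filter
        (fun p => ({p.1, p.2.1, p.2.2} : Finset (Fin n → Bool)) = {a, b, c})
      = {(a,b,c), (a,c,b), (b,a,c), (b,c,a), (c,a,b), (c,b,a)} := by
  ext ⟨x, y, z⟩
  simp only [mem_filter, mem_univ, true_and, mem_insert, mem_singleton, Prod.mk.injEq]
  constructor
  · rintro ⟨⟨h1, h2, h3⟩, hs⟩
    have hxy := hne h1
    have hxz := hne h2
    have hyz := hne h3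
    have hx : x = a ∨ x = b ∨ x = c := by
      have : x ∈ ({a, b, c} : Finset (Fin n → Bool)) := by rw [← hs]; simp
      simpa using this
    have hy : y = a ∨ y = b ∨ y = c := by
      have : y ∈ ({a, b, c} : Finset (Fin n → Bool)) := by rw [← hs]; simp
      simpa using this
    have hz : z = a ∨ z = b ∨ z = c := by
      have : z ∈ ({a, b, c} : Finset (Fin n → Bool)) := by rw [← hs]; simp
      simpa using this
    rcases hx with rfl | rfl | rfl <;> rcases hy with rfl | rfl | rfl <;>
      rcases hz with rfl | rfl | rfl <;>
      first
        | exact absurd rfl hxy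
        | exact absurd rfl hxz
        | exact absurd rfl hyz
        | simp
  · rintro (⟨rfl, rfl, rfl⟩ | ⟨rfl, rfl, rfl⟩ | ⟨rfl, rfl, rfl⟩ |
      ⟨rfl, rfl, rfl⟩ | ⟨rfl, rfl, rfl⟩ | ⟨rfl, rfl, rfl⟩) <;>
      refine ⟨⟨by assumption, by assumption, by assumption⟩, ?_⟩ <;>
      (ext w
       simp only [mem_insert, mem_singleton]
       try itauto)

lemma six_card (n : ℕ) (a b c : Fin n → Bool) (hab : a ≠ b) (hac : a ≠ c) (hbc : b ≠ c) :
    ({(a,b,c), (a,c,b), (b,a,c), (b,c,a), (c,a,b), (c,b,a)} :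
      Finset ((Fin n → Bool) × (Fin n → Bool) × (Fin n → Bool))).card = 6 := by
  have hba : b ≠ a := hab.symm
  have hca : c ≠ a := hac.symm
  have hcb : c ≠ b := hbc.symm
  rw [Finset.card_insert_of_notMem (by simp [Prod.ext_iff, hab, hac, hbc, hba, hca, hcb]),
    Finset.card_insert_of_notMem (by simp [Prod.ext_iff, hab, hac, hbc, hba, hca, hcb]),
    Finset.card_insert_of_notMem (by simp [Prod.ext_iff, hab, hac, hbc, hba, hca, hcb]),
    Finset.card_insert_of_notMem (by simp [Prod.ext_iff, hab, hac, hbc, hba, hca, hcb]),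
    Finset.card_insert_of_notMem (by simp [Prod.ext_iff, hab, hac, hbc, hba, hca, hcb]),
    Finset.card_singleton]

lemma fiberwise (n m : ℕ) (hm : 0 < m) :
    (univ.filter (fun p : (Fin n → Bool) × (Fin n → Bool) × (Fin n → Bool) =>
        hammingDist p.1 p.2.1 = 2*m ∧ hammingDist p.1 p.2.2 = 2*m
          ∧ hammingDist p.2.1 p.2.2 = 2*m)).card
      = 6 * (univ.filter (fun T : Finset (Fin n → Bool) =>
          T.card = 3 ∧ ∀ u ∈ T, ∀ v ∈ T, u ≠ v → hammingDist u v = 2*m)).card := by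
  classical
  have hne : ∀ {x y : Fin n → Bool}, hammingDist x y = 2*m → x ≠ y := by
    intro x y h hxy
    subst hxy
    simp [hammingDist_self] at h
    omega
  have hmem : ∀ p ∈ (univ.filter (fun p : (Fin n → Bool) × (Fin n → Bool) × (Fin n → Bool) =>
      hammingDist p.1 p.2.1 = 2*m ∧ hammingDist p.1 p.2.2 = 2*m
        ∧ hammingDist p.2.1 p.2.2 = 2*m)),
      ({p.1, p.2.1, p.2.2} : Finset (Fin n → Bool)) ∈ (univ.filter (fun T : Finset (Fin n → Bool) =>
        T.card = 3 ∧ ∀ u ∈ T, ∀ v ∈ T, u ≠ v → hammingDist u v = 2*m)) := by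
    rintro ⟨x, y, z⟩ hp
    simp only [mem_filter, mem_univ, true_and] at hp ⊢
    obtain ⟨h1, h2, h3⟩ := hp
    constructor
    · rw [Finset.card_insert_of_notMem (by simp [hne h1, hne h2]),
        Finset.card_insert_of_notMem (by simp [hne h3]), Finset.card_singleton]
    · intro u hu v hv huv
      simp only [mem_insert, mem_singleton] at hu hv
      rcases hu with rfl | rfl | rfl <;> rcases hv with rfl | rfl | rfl <;>
        first
          | exact absurd rfl huv
          | assumption
          | (rw [hammingDist_comm]; assumption)
  rw [Finset.card_eq_sum_card_fiberwise hmem]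
  rw [Finset.sum_congr rfl (fun T hT => ?_), Finset.sum_const, smul_eq_mul, mul_comm]
  simp only [mem_filter, mem_univ, true_and] at hT
  obtain ⟨hT3, hTd⟩ := hT
  obtain ⟨a, b, c, hab, hac, hbc, rfl⟩ := Finset.card_eq_three.mp hT3
  have habm : a ∈ ({a, b, c} : Finset (Fin n → Bool)) := by simp
  have hbbm : b ∈ ({a, b, c} : Finset (Fin n → Bool)) := by simp
  have hcbm : c ∈ ({a, b, c} : Finset (Fin n → Bool)) := by simp
  have dab : hammingDist a b = 2*m := hTd a habm b hbbm hab
  have dac : hammingDist a c = 2*m := hTd a habm c hcbm hac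
  have dbc : hammingDist b c = 2*m := hTd b hbbm c hcbm hbc
  have dba : hammingDist b a = 2*m := by rw [hammingDist_comm]; exact dab
  have dca : hammingDist c a = 2*m := by rw [hammingDist_comm]; exact dac
  have dcb : hammingDist c b = 2*m := by rw [hammingDist_comm]; exact dbc
  rw [fiber_eq n m a b c dab dac dbc dba dca dcb hne]
  exact six_card n a b c hab hac hbc

lemma ncard_eq_filter_card (n r : ℕ) :
    ({T : Finset (Fin n → Bool) | T.card = 3 ∧
        ∀ u ∈ T, ∀ v ∈ T, u ≠ v → hammingDist u v = r} : Set (Finset (Fin n → Bool))).ncard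
      = (univ.filter (fun T : Finset (Fin n → Bool) =>
          T.card = 3 ∧ ∀ u ∈ T, ∀ v ∈ T, u ≠ v → hammingDist u v = r)).card := by
  classical
  rw [Set.ncard_eq_toFinset_card']
  congr 1
  ext T
  simp

/-- the number of triangles in the `r`-distance graph of the
`n`-dimensional hypercube is `(1/6) · 2^n · C(n,r) · C(r,r/2) · C(n-r,r/2)`. -/
theorem card_triangles_distance_graph (n r : ℕ) (hn : 0 < n) (hr : 0 < r) (hre : Even r) :
    (({T : Finset (Fin n → Bool) | T.card = 3 ∧
        ∀ u ∈ T, ∀ v ∈ T, u ≠ v → hammingDist u v = r} : Set (Finset (Fin n → Bool))).ncard : ℝ)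
      = (1 / 6) * 2 ^ n * (n.choose r) * (r.choose (r / 2)) * ((n - r).choose (r / 2)) := by
  classical
  obtain ⟨m, hm⟩ := hre
  have hm0 : 0 < m := by omega
  have h2m : r = 2 * m := by omega
  subst h2m
  have hdiv : 2 * m / 2 = m := by omega
  rw [hdiv, ncard_eq_filter_card n (2*m)]
  have h6 : 6 * (univ.filter (fun T : Finset (Fin n → Bool) =>
      T.card = 3 ∧ ∀ u ∈ T, ∀ v ∈ T, u ≠ v → hammingDist u v = 2*m)).card
      = 2^n * (n.choose (2*m) * ((2*m).choose m * (n - 2*m).choose m)) := by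
    rw [← fiberwise n m hm0]
    exact OT_card (n := n) m
  have h6' : 6 * ((univ.filter (fun T : Finset (Fin n → Bool) =>
      T.card = 3 ∧ ∀ u ∈ T, ∀ v ∈ T, u ≠ v → hammingDist u v = 2*m)).card : ℝ)
      = 2^n * ((n.choose (2*m) : ℝ) * ((2*m).choose m * (n - 2*m).choose m)) := by
    exact_mod_cast congrArg (Nat.cast : ℕ → ℝ) h6
  linarith
end

section
/- Let r be a positive even integer and let u, v be vertices of the n-dimensional hypercube with Hamming distance exactly r. Then the number of vertices w such that both the Hamming distance from u to w and the Hamming distance from v to w equal r is exactly C(r, r/2) · C(n−r, r/2), where C(a,b) denotes the binomial coefficient. -/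
open Finset

lemma count_split {α : Type*} [Fintype α] [DecidableEq α] (D : Finset α) (a b : ℕ) :
    (univ.filter fun S : Finset α => (S ∩ D).card = a ∧ (S \ D).card = b).card
      = D.card.choose a * Dᶜ.card.choose b := by
  rw [← Finset.card_powersetCard, ← Finset.card_powersetCard, ← Finset.card_product]
  apply Finset.card_bij' (fun S _ => (S ∩ D, S \ D)) (fun p _ => p.1 ∪ p.2)
  · intro S hS
    simp only [mem_filter, mem_univ, true_and] at hS
    simp only [Finset.mem_product, Finset.mem_powersetCard]
    refine ⟨⟨inter_subset_right, hS.1⟩, ⟨fun x hx => ?_, hS.2⟩⟩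
    simp only [Finset.mem_sdiff] at hx
    simp [hx.2]
  · intro p hp
    simp only [Finset.mem_product, Finset.mem_powersetCard] at hp
    obtain ⟨⟨h1, hc1⟩, ⟨h2, hc2⟩⟩ := hp
    have hd : Disjoint p.2 D := by
      rw [Finset.disjoint_left]
      intro x hx
      have := h2 hx
      simp only [Finset.mem_compl] at this
      exact this
    simp only [mem_filter, mem_univ, true_and]
    constructor
    · rw [Finset.union_inter_distrib_right, Finset.inter_eq_left.mpr h1,
        (Finset.disjoint_iff_inter_eq_empty.mp hd), Finset.union_empty, hc1]
    · rw [Finset.union_sdiff_distrib, Finset.sdiff_eq_empty_iff_subset.mpr h1,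
        Finset.empty_union, Finset.sdiff_eq_self_of_disjoint hd, hc2]
  · intro S hS
    exact by
      ext x
      simp only [Finset.mem_union, Finset.mem_inter, Finset.mem_sdiff]
      tauto
  · intro p hp
    simp only [Finset.mem_product, Finset.mem_powersetCard] at hp
    obtain ⟨⟨h1, hc1⟩, ⟨h2, hc2⟩⟩ := hp
    have hd : Disjoint p.2 D := by
      rw [Finset.disjoint_left]
      intro x hx
      have := h2 hx
      simpa using this
    ext x
    · simp only [Finset.mem_inter, Finset.mem_union]
      constructor
      · rintro ⟨h | h, hD⟩
        · exact h
        · exact absurd hD (Finset.disjoint_left.mp hd h)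
      · intro h; exact ⟨Or.inl h, h1 h⟩
    · simp only [Finset.mem_sdiff, Finset.mem_union]
      constructor
      · rintro ⟨h | h, hD⟩
        · exact absurd (h1 h) hD
        · exact h
      · intro h; exact ⟨Or.inr h, Finset.disjoint_left.mp hd h⟩

/-- given two hypercube vertices at Hamming distance exactly `r` (with `r`
positive and even), the number of vertices at Hamming distance `r` from both is
`C(r, r/2) · C(n-r, r/2)`. -/
theorem card_common_neighbors_distance_graph
    (n r : ℕ) (hr : 0 < r) (hre : Even r) (u v : Fin n → Bool)
    (huv : hammingDist u v = r) :
    (Finset.univ.filter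
        (fun w : Fin n → Bool => hammingDist u w = r ∧ hammingDist v w = r)).card
      = (r.choose (r / 2)) * ((n - r).choose (r / 2)) := by
  classical
  set D : Finset (Fin n) := univ.filter (fun i => u i ≠ v i) with hD
  have hDcard : D.card = r := huv
  have key : (Finset.univ.filter
        (fun w : Fin n → Bool => hammingDist u w = r ∧ hammingDist v w = r)).card
      = (univ.filter fun S : Finset (Fin n) =>
          (S ∩ D).card = r / 2 ∧ (S \ D).card = r / 2).card := by
    apply Finset.card_bij' (fun w _ => univ.filter (fun i => w i ≠ u i))
      (fun S _ => fun i => if i ∈ S then !(u i) else u i)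
    · intro w hw
      simp only [mem_filter, mem_univ, true_and] at hw
      obtain ⟨h1, h2⟩ := hw
      set S : Finset (Fin n) := univ.filter (fun i => w i ≠ u i) with hS
      have hScard : S.card = r := by
        rw [← h1]; unfold hammingDist
        congr 1; ext i; simp [hS, ne_comm]
      -- the set where w ≠ v equals symmetric difference
      have hT : (univ.filter (fun i => v i ≠ w i)) = (S \ D) ∪ (D \ S) := by
        ext i
        simp only [Finset.mem_union, Finset.mem_sdiff, mem_filter, mem_univ, true_and, hS, hD]
        cases hu : u i <;> cases hv : v i <;> cases hwb : w i <;> simp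
      have hTcard : (S \ D).card + (D \ S).card = r := by
        rw [← Finset.card_union_of_disjoint (Finset.sdiff_disjoint.mono_right sdiff_le), ← hT]
        exact h2
      have e1 : (S ∩ D).card + (S \ D).card = r := by
        rw [Finset.card_inter_add_card_sdiff]; exact hScard
      have e2 : (S ∩ D).card + (D \ S).card = r := by
        rw [Finset.inter_comm, Finset.card_inter_add_card_sdiff]; exact hDcard
      obtain ⟨m, hm⟩ := hre
      simp only [mem_filter, mem_univ, true_and]
      omega
    · intro S hS
      simp only [mem_filter, mem_univ, true_and] at hS ⊢
      obtain ⟨h1, h2⟩ := hS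
      obtain ⟨m, hm⟩ := hre
      have hSu : (univ.filter fun i => u i ≠ (if i ∈ S then !(u i) else u i)) = S := by
        ext i
        simp only [mem_filter, mem_univ, true_and]
        by_cases h : i ∈ S <;> simp [h]
      have hSv : (univ.filter fun i => v i ≠ (if i ∈ S then !(u i) else u i))
          = (S \ D) ∪ (D \ S) := by
        ext i
        simp only [Finset.mem_union, Finset.mem_sdiff, mem_filter, mem_univ, true_and, hD]
        by_cases h : i ∈ S <;>
          cases hu : u i <;> cases hv : v i <;> simp [h]
      have hScard : S.card = r := by
        rw [← Finset.card_inter_add_card_sdiff S D, h1, h2]; omega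
      constructor
      · show (univ.filter _).card = r
        rw [hSu]; exact hScard
      · show (univ.filter _).card = r
        rw [hSv, Finset.card_union_of_disjoint
          (Finset.sdiff_disjoint.mono_right sdiff_le)]
        have e2 : (S ∩ D).card + (D \ S).card = r := by
          rw [Finset.inter_comm, Finset.card_inter_add_card_sdiff]; exact hDcard
        omega
    · intro w hw
      funext i
      by_cases h : w i = u i <;> simp [h]
      cases hwb : w i <;> cases hu : u i <;> simp_all
    · intro S hS
      ext i
      simp only [mem_filter, mem_univ, true_and]
      by_cases h : i ∈ S <;> simp [h]
  rw [key, count_split, hDcard]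
  congr 1
  have : Dᶜ.card = n - r := by
    rw [Finset.card_compl, hDcard, Fintype.card_fin]
  rw [this]
end

section
/- Let n ≥ 1. Any triangle-free subset S of the 2-distance graph of the n-dimensional hypercube satisfies |S| ≤ 4 · 2^n / n. -/
open Finset

private lemma flip_mem {n : ℕ} (u : Fin n → Bool) (i : Fin n) :
    hammingDist u (Function.update u i (!u i)) = 1 := by
  rw [hammingDist]
  have : ({j | u j ≠ Function.update u i (!u i) j} : Finset (Fin n)) = {i} := by
    ext j
    simp only [mem_filter, mem_univ, true_and, mem_singleton]
    by_cases h : j = i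
    · subst h; simp [Function.update_self]
    · simp [Function.update_of_ne h, h]
  rw [this, card_singleton]

private lemma dist_one_iff {n : ℕ} {u x : Fin n → Bool} :
    hammingDist u x = 1 ↔ ∃ i, x = Function.update u i (!u i) := by
  constructor
  · intro h
    rw [hammingDist, card_eq_one] at h
    obtain ⟨i, hi⟩ := h
    refine ⟨i, funext fun j => ?_⟩
    by_cases hj : j = i
    · subst hj
      have : u j ≠ x j := by
        have : j ∈ ({j' | u j' ≠ x j'} : Finset (Fin n)) := by rw [hi]; simp
        simpa using this
      rw [Function.update_self]
      cases hx : x j <;> cases hu : u j <;> simp_all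
    · have : u j = x j := by
        by_contra hne
        have : j ∈ ({j' | u j' ≠ x j'} : Finset (Fin n)) := by simp [hne]
        rw [hi, mem_singleton] at this
        exact hj this
      rw [Function.update_of_ne hj, this]
  · rintro ⟨i, rfl⟩; exact flip_mem u i

private lemma flip_dist_two {n : ℕ} (u : Fin n → Bool) {i j : Fin n} (hij : i ≠ j) :
    hammingDist (Function.update u i (!u i)) (Function.update u j (!u j)) = 2 := by
  rw [hammingDist]
  have : ({k | Function.update u i (!u i) k ≠ Function.update u j (!u j) k} :
      Finset (Fin n)) = {i, j} := by
    ext k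
    simp only [mem_filter, mem_univ, true_and, mem_insert, mem_singleton]
    by_cases hki : k = i
    · subst hki
      simp [Function.update_self, Function.update_of_ne hij]
    · by_cases hkj : k = j
      · subst hkj
        simp [Function.update_self, Function.update_of_ne (Ne.symm hij), hki]
      · simp [Function.update_of_ne hki, Function.update_of_ne hkj, hki, hkj]
  rw [this, card_insert_of_notMem (by simpa using hij), card_singleton]

private lemma sphere_card_s4 {n : ℕ} (u : Fin n → Bool) :
    ({x | hammingDist u x = 1} : Finset (Fin n → Bool)).card = n := by
  have hinj : Function.Injective (fun i => Function.update u i (!u i)) := by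
    intro i j h
    by_contra hij
    have h2 := congrFun h i
    simp only at h2
    rw [Function.update_self, Function.update_of_ne hij] at h2
    simp at h2
  have himg : ({x | hammingDist u x = 1} : Finset (Fin n → Bool)) =
      univ.image (fun i => Function.update u i (!u i)) := by
    ext x
    simp only [mem_filter, mem_univ, true_and, mem_image]
    rw [dist_one_iff]
    constructor
    · rintro ⟨i, rfl⟩; exact ⟨i, rfl⟩
    · rintro ⟨i, rfl⟩; exact ⟨i, rfl⟩
  rw [himg, card_image_of_injective _ hinj, card_univ, Fintype.card_fin]

/-- any triangle-free subset of the `2`-distance graph of the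
`n`-dimensional hypercube (`n ≥ 1`) has at most `4 · 2^n / n` vertices. -/
theorem triangle_free_two_distance_upper_bound
    (n : ℕ) (hn : 1 ≤ n) (S : Finset (Fin n → Bool))
    (htf : ∀ u ∈ S, ∀ v ∈ S, ∀ w ∈ S, u ≠ v → u ≠ w → v ≠ w →
      ¬(hammingDist u v = 2 ∧ hammingDist u w = 2 ∧ hammingDist v w = 2)) :
    (S.card : ℝ) ≤ 4 * 2 ^ n / n := by
  -- key claim: each x has at most 2 elements of S at distance 1
  have key : ∀ x : Fin n → Bool, (S.filter (fun u => hammingDist u x = 1)).card ≤ 2 := by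
    intro x
    by_contra h
    push_neg at h
    obtain ⟨a, b, c, ha, hb, hc, hab, hac, hbc⟩ := Finset.two_lt_card_iff.mp h
    simp only [mem_filter] at ha hb hc
    obtain ⟨ia, hia⟩ := dist_one_iff.mp (by rw [hammingDist_comm]; exact ha.2 :
      hammingDist x a = 1)
    obtain ⟨ib, hib⟩ := dist_one_iff.mp (by rw [hammingDist_comm]; exact hb.2 :
      hammingDist x b = 1)
    obtain ⟨ic, hic⟩ := dist_one_iff.mp (by rw [hammingDist_comm]; exact hc.2 :
      hammingDist x c = 1)
    have hiab : ia ≠ ib := fun e => hab (by rw [hia, hib, e])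
    have hiac : ia ≠ ic := fun e => hac (by rw [hia, hic, e])
    have hibc : ib ≠ ic := fun e => hbc (by rw [hib, hic, e])
    exact htf a ha.1 b hb.1 c hc.1 hab hac hbc
      ⟨by rw [hia, hib]; exact flip_dist_two x hiab,
       by rw [hia, hic]; exact flip_dist_two x hiac,
       by rw [hib, hic]; exact flip_dist_two x hibc⟩
  have count : n * S.card ≤ 2 * 2 ^ n := by
    have h1 : ∑ u ∈ S, ({x | hammingDist u x = 1} : Finset (Fin n → Bool)).card
        = ∑ x : Fin n → Bool, (S.filter (fun u => hammingDist u x = 1)).card := by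
      simp_rw [Finset.card_filter]
      rw [Finset.sum_comm]
    have h2 : ∑ u ∈ S, ({x | hammingDist u x = 1} : Finset (Fin n → Bool)).card
        = n * S.card := by
      simp_rw [sphere_card_s4]
      rw [Finset.sum_const, smul_eq_mul, mul_comm]
    have h3 : ∑ x : Fin n → Bool, (S.filter (fun u => hammingDist u x = 1)).card
        ≤ 2 * 2 ^ n := by
      calc ∑ x : Fin n → Bool, (S.filter (fun u => hammingDist u x = 1)).card
          ≤ ∑ _x : Fin n → Bool, 2 := Finset.sum_le_sum fun x _ => key x
        _ = 2 * 2 ^ n := by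
            rw [Finset.sum_const, smul_eq_mul, card_univ]
            simp [mul_comm]
    omega
  have hnR : (0 : ℝ) < n := by exact_mod_cast hn
  rw [le_div_iff₀ hnR]
  have : (n : ℝ) * S.card ≤ 2 * 2 ^ n := by exact_mod_cast count
  nlinarith [pow_pos (by norm_num : (0:ℝ) < 2) n]
end

section
/- Let S be a triangle-free subset of the 2-distance graph of the n-dimensional hypercube, and for 1 ≤ k ≤ n let S_k denote the number of elements of S having exactly k coordinates equal to 1 (the k-th level of the hypercube). Then k · S_k ≤ 2 · C(n, k−1), where C(a,b) denotes the binomial coefficient. -/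
set_option synthInstance.maxHeartbeats 1000000
set_option maxHeartbeats 1000000

open Finset

lemma ham_two_aux {n : ℕ} (T : Finset (Fin n)) (i j : Fin n) (hi : i ∉ T) (hj : j ∉ T)
    (hij : i ≠ j) (v w : Fin n → Bool)
    (hv : Finset.univ.filter (fun x => v x = true) = insert i T)
    (hw : Finset.univ.filter (fun x => w x = true) = insert j T) :
    hammingDist v w = 2 := by
  classical
  have hv' : ∀ x, v x = true ↔ x ∈ insert i T := by
    intro x; rw [← hv]; simp
  have hw' : ∀ x, w x = true ↔ x ∈ insert j T := by
    intro x; rw [← hw]; simp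
  have key : (Finset.univ.filter fun x => v x ≠ w x) = {i, j} := by
    ext x
    simp only [mem_filter, mem_univ, true_and, mem_insert, mem_singleton]
    by_cases h1 : x = i
    · subst h1
      have hvx : v x = true := (hv' x).2 (mem_insert_self _ _)
      have hwx : w x = false := by
        rw [← Bool.not_eq_true]
        intro h
        rcases mem_insert.1 ((hw' x).1 h) with h' | h'
        · exact hij h'
        · exact hi h'
      simp [hvx, hwx]
    · by_cases h2 : x = j
      · subst h2
        have hwx : w x = true := (hw' x).2 (mem_insert_self _ _)
        have hvx : v x = false := by
          rw [← Bool.not_eq_true]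
          intro h
          rcases mem_insert.1 ((hv' x).1 h) with h' | h'
          · exact hij h'.symm
          · exact hj h'
        simp [hvx, hwx]
      · have : v x = w x := by
          have e1 : v x = true ↔ x ∈ T := by
            rw [hv' x, mem_insert]; simp [h1]
          have e2 : w x = true ↔ x ∈ T := by
            rw [hw' x, mem_insert]; simp [h2]
          by_cases hx : x ∈ T
          · rw [e1.2 hx, e2.2 hx]
          · have f1 : v x = false := by
              rw [← Bool.not_eq_true]; exact fun h => hx (e1.1 h)
            have f2 : w x = false := by
              rw [← Bool.not_eq_true]; exact fun h => hx (e2.1 h)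
            rw [f1, f2]
        simp [this, h1, h2]
  show (Finset.univ.filter fun x => v x ≠ w x).card = 2
  rw [key, card_pair hij]

/-- level bound for triangle-free subsets of the `2`-distance graph:
if `S_k` is the number of elements of `S` at level `k` (exactly `k` ones), then
`k · S_k ≤ 2 · C(n, k-1)` for `1 ≤ k ≤ n`. -/
theorem level_bound_two_distance
    (n k : ℕ) (hk1 : 1 ≤ k) (hkn : k ≤ n) (S : Finset (Fin n → Bool))
    (htf : ∀ u ∈ S, ∀ v ∈ S, ∀ w ∈ S, u ≠ v → u ≠ w → v ≠ w →
      ¬(hammingDist u v = 2 ∧ hammingDist u w = 2 ∧ hammingDist v w = 2)) :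
    k * (S.filter
        (fun v => (Finset.univ.filter (fun i : Fin n => v i = true)).card = k)).card
      ≤ 2 * n.choose (k - 1) := by
  classical
  set Sk := S.filter
      (fun v => (Finset.univ.filter (fun i : Fin n => v i = true)).card = k) with hSkdef
  set s : Finset ((Fin n → Bool) × Fin n) :=
    (Sk ×ˢ Finset.univ).filter (fun p => p.1 p.2 = true) with hsdef
  -- cardinality of s
  have hscard : s.card = k * Sk.card := by
    rw [hsdef, Finset.card_filter, Finset.sum_product]
    have : ∀ v ∈ Sk, (∑ i : Fin n, if v i = true then 1 else 0) = k := by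
      intro v hv
      have := (Finset.mem_filter.1 hv).2
      rw [← this, Finset.card_filter]
    rw [Finset.sum_congr rfl this, Finset.sum_const, smul_eq_mul, mul_comm]
  set f : ((Fin n → Bool) × Fin n) → Finset (Fin n) :=
    fun p => (Finset.univ.filter (fun i => p.1 i = true)).erase p.2 with hfdef
  -- structure of elements of s
  have hstruct : ∀ p ∈ s, ∀ T, f p = T →
      p.2 ∉ T ∧ Finset.univ.filter (fun i => p.1 i = true) = insert p.2 T ∧ p.1 ∈ S := by
    intro p hp T hT
    rw [hsdef, Finset.mem_filter, Finset.mem_product] at hp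
    obtain ⟨⟨hpS, -⟩, hptrue⟩ := hp
    have hmem : p.2 ∈ Finset.univ.filter (fun i => p.1 i = true) := by
      simp [hptrue]
    refine ⟨?_, ?_, (Finset.mem_filter.1 hpS).1⟩
    · rw [← hT]; exact Finset.notMem_erase _ _
    · rw [← hT, hfdef]
      exact (Finset.insert_erase hmem).symm
  -- fibers have size at most 2
  have hfiber : ∀ T ∈ s.image f, (s.filter (fun p => f p = T)).card ≤ 2 := by
    intro T hT
    by_contra hgt
    push_neg at hgt
    obtain ⟨p, hp, q, hq, r, hr, hpq, hpr, hqr⟩ := Finset.two_lt_card.1 hgt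
    simp only [Finset.mem_filter] at hp hq hr
    obtain ⟨hp1, hp2, hpS⟩ := hstruct p hp.1 T hp.2
    obtain ⟨hq1, hq2, hqS⟩ := hstruct q hq.1 T hq.2
    obtain ⟨hr1, hr2, hrS⟩ := hstruct r hr.1 T hr.2
    -- same first component forces equal pairs
    have key : ∀ a b : (Fin n → Bool) × Fin n,
        a.2 ∉ T → b.2 ∉ T →
        Finset.univ.filter (fun i => a.1 i = true) = insert a.2 T →
        Finset.univ.filter (fun i => b.1 i = true) = insert b.2 T →
        a.1 = b.1 → a = b := by
      intro a b ha hb ha2 hb2 h1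
      have : insert a.2 T = insert b.2 T := by rw [← ha2, ← hb2, h1]
      have ha2b : a.2 ∈ insert b.2 T := by rw [← this]; exact Finset.mem_insert_self _ _
      rcases Finset.mem_insert.1 ha2b with h | h
      · exact Prod.ext h1 h
      · exact absurd h ha
    have hvpq : p.1 ≠ q.1 := fun h => hpq (key p q hp1 hq1 hp2 hq2 h)
    have hvpr : p.1 ≠ r.1 := fun h => hpr (key p r hp1 hr1 hp2 hr2 h)
    have hvqr : q.1 ≠ r.1 := fun h => hqr (key q r hq1 hr1 hq2 hr2 h)
    have hidx : ∀ a b : (Fin n → Bool) × Fin n,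
        a.2 ∉ T → b.2 ∉ T →
        Finset.univ.filter (fun i => a.1 i = true) = insert a.2 T →
        Finset.univ.filter (fun i => b.1 i = true) = insert b.2 T →
        a.1 ≠ b.1 → hammingDist a.1 b.1 = 2 := by
      intro a b ha hb ha2 hb2 hne
      have hab : a.2 ≠ b.2 := by
        intro h
        apply hne
        funext x
        have e1 : a.1 x = true ↔ x ∈ insert a.2 T := by rw [← ha2]; simp
        have e2 : b.1 x = true ↔ x ∈ insert b.2 T := by rw [← hb2]; simp
        rw [h] at e1
        by_cases hx : x ∈ insert b.2 T
        · rw [e1.2 hx, e2.2 hx]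
        · have f1 : a.1 x = false := by
            rw [← Bool.not_eq_true]; exact fun hh => hx (e1.1 hh)
          have f2 : b.1 x = false := by
            rw [← Bool.not_eq_true]; exact fun hh => hx (e2.1 hh)
          rw [f1, f2]
      exact ham_two_aux T a.2 b.2 ha hb hab a.1 b.1 ha2 hb2
    exact htf p.1 hpS q.1 hqS r.1 hrS hvpq hvpr hvqr
      ⟨hidx p q hp1 hq1 hp2 hq2 hvpq, hidx p r hp1 hr1 hp2 hr2 hvpr,
       hidx q r hq1 hr1 hq2 hr2 hvqr⟩
  have hmain : s.card ≤ 2 * (s.image f).card :=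
    Finset.card_le_mul_card_image s 2 hfiber
  -- image lands in (k-1)-subsets
  have himg : (s.image f).card ≤ n.choose (k - 1) := by
    have hsub : s.image f ⊆ Finset.univ.powersetCard (k - 1) := by
      intro T hT
      obtain ⟨p, hp, hfp⟩ := Finset.mem_image.1 hT
      obtain ⟨h1, h2, -⟩ := hstruct p hp T hfp
      rw [Finset.mem_powersetCard]
      refine ⟨Finset.subset_univ _, ?_⟩
      have hps : p.1 ∈ Sk := by
        rw [hsdef, Finset.mem_filter, Finset.mem_product] at hp
        exact hp.1.1
      have hcard : (Finset.univ.filter (fun i => p.1 i = true)).card = k :=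
        (Finset.mem_filter.1 hps).2
      rw [h2, Finset.card_insert_of_notMem h1] at hcard
      omega
    calc (s.image f).card ≤ (Finset.univ.powersetCard (k-1)).card :=
          Finset.card_le_card hsub
      _ = n.choose (k - 1) := by
          rw [Finset.card_powersetCard, Finset.card_univ, Fintype.card_fin]
  calc k * Sk.card = s.card := hscard.symm
    _ ≤ 2 * (s.image f).card := hmain
    _ ≤ 2 * n.choose (k - 1) := by omega
end

section
/- Let r be a positive even integer with 2r ≤ n, let k be an integer with r/2 < k ≤ n/2, and let S be a triangle-free subset of the r-distance graph of the n-dimensional hypercube. Let S_k denote the number of elements of S with exactly k coordinates equal to 1. Then C(k, r/2) · S_k ≤ 2 · C(n, k − r/2) · C(n − k + r/2 − 1, r/2 − 1), where C(a,b) denotes the binomial coefficient. -/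
namespace FranklAux

open Fin.NatCast

/-- clockwise cyclic gap from `x` to `y` on a cycle of length `M` (for `x y < M`). -/
def cgap (M x y : ℕ) : ℕ := if x ≤ y then y - x else y + M - x

/-- arcs of length `s` starting at `x` and `y` are disjoint. -/
def sep (M s x y : ℕ) : Prop := s ≤ cgap M x y ∧ s ≤ cgap M y x

instance (M s x y : ℕ) : Decidable (sep M s x y) := by unfold sep; infer_instance

lemma lemmaA (s : ℕ) (hs : 1 ≤ s) : ∀ M, 3 * s ≤ M → ∀ P : Finset ℕ,
    (∀ p ∈ P, p < M) →
    (¬ ∃ x ∈ P, ∃ y ∈ P, ∃ z ∈ P, sep M s x y ∧ sep M s x z ∧ sep M s y z) →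
    P.card ≤ 2 * s := by
  intro M hM
  induction M, hM using Nat.le_induction with
  | base =>
    intro P hP htf
    have hcard : P.card = ∑ r ∈ Finset.range s, (P.filter (fun x => x % s = r)).card := by
      apply Finset.card_eq_sum_card_fiberwise
      intro x hx
      exact Finset.mem_range.mpr (Nat.mod_lt _ hs)
    rw [hcard]
    calc ∑ r ∈ Finset.range s, (P.filter (fun x => x % s = r)).card
        ≤ ∑ _r ∈ Finset.range s, 2 := by
          apply Finset.sum_le_sum
          intro r hr
          have hrs : r < s := Finset.mem_range.mp hr
          -- the fiber is contained in {r, r+s, r+2s}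
          have hsub : P.filter (fun x => x % s = r) ⊆ {r, s + r, s * 2 + r} := by
            intro x hx
            rw [Finset.mem_filter] at hx
            obtain ⟨hxP, hxr⟩ := hx
            have hxM : x < 3 * s := hP x hxP
            have hex : ∃ d, d < 3 ∧ x = s * d + r := by
              refine ⟨x / s, ?_, ?_⟩
              · by_contra hd3
                push_neg at hd3
                have h3 : s * 3 ≤ s * (x / s) := Nat.mul_le_mul_left s hd3
                have hle : s * (x / s) ≤ x := Nat.mul_div_le x s
                omega
              · have := Nat.div_add_mod x s
                omega
            obtain ⟨d, hd3, rfl⟩ := hex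
            interval_cases d <;>
              simp only [Finset.mem_insert, Finset.mem_singleton, eq_self_iff_true, or_true, true_or] <;> omega
          by_contra hc
          push_neg at hc
          have h3 : ({r, s + r, s * 2 + r} : Finset ℕ).card ≤ 3 := by
            apply le_trans (Finset.card_insert_le _ _)
            simp [Finset.card_insert_le]
            have := Finset.card_insert_le (s+r) ({s*2+r} : Finset ℕ)
            simp at this ⊢
            omega
          have heq : P.filter (fun x => x % s = r) = {r, s + r, s * 2 + r} := by
            apply Finset.eq_of_subset_of_card_le hsub
            omega
          have hrP : r ∈ P := by
            have : r ∈ P.filter (fun x => x % s = r) := by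
              rw [heq]; simp
            exact (Finset.mem_filter.mp this).1
          have hrsP : s + r ∈ P := by
            have : s + r ∈ P.filter (fun x => x % s = r) := by rw [heq]; simp
            exact (Finset.mem_filter.mp this).1
          have hrs2P : s * 2 + r ∈ P := by
            have : s * 2 + r ∈ P.filter (fun x => x % s = r) := by rw [heq]; simp
            exact (Finset.mem_filter.mp this).1
          exact htf ⟨r, hrP, s + r, hrsP, s * 2 + r, hrs2P, by
            unfold sep cgap; split_ifs <;> omega, by
            unfold sep cgap; split_ifs <;> omega, by
            unfold sep cgap; split_ifs <;> omega⟩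
      _ = 2 * s := by simp [mul_comm]
  | succ M hM ih =>
    intro P hP htf
    by_contra hc
    push_neg at hc
    by_cases hfull : ∀ q, q < M + 1 → q ∈ P
    · -- P contains 0, s, 2s: a separated triple
      have h0 : (0 : ℕ) ∈ P := hfull 0 (by omega)
      have h1 : s ∈ P := hfull s (by omega)
      have h2 : s * 2 ∈ P := hfull (s * 2) (by omega)
      exact htf ⟨0, h0, s, h1, s * 2, h2, by
        unfold sep cgap; split_ifs <;> omega, by
        unfold sep cgap; split_ifs <;> omega, by
        unfold sep cgap; split_ifs <;> omega⟩
    · push_neg at hfull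
      obtain ⟨q, hqM, hqP⟩ := hfull
      set φ : ℕ → ℕ := fun x => if x < q then x else x - 1 with hφ
      have hinj : Set.InjOn φ P := by
        intro x hx y hy hxy
        have hxq : x ≠ q := fun h => hqP (h ▸ hx)
        have hyq : y ≠ q := fun h => hqP (h ▸ hy)
        simp only [hφ] at hxy
        split_ifs at hxy <;> omega
      have hcard : (P.image φ).card = P.card := Finset.card_image_of_injOn hinj
      have hmono : ∀ x y, x < M + 1 → y < M + 1 → x ≠ q → y ≠ q →
          cgap M (φ x) (φ y) ≤ cgap (M + 1) x y := by
        intro x y hx hy hxq hyq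
        simp only [hφ]
        unfold cgap
        split_ifs <;> omega
      have := ih (P.image φ) (by
        intro p hp
        obtain ⟨x, hx, rfl⟩ := Finset.mem_image.mp hp
        have hxq : x ≠ q := fun h => hqP (h ▸ hx)
        have := hP x hx
        simp only [hφ]
        split_ifs <;> omega) (by
        rintro ⟨x', hx', y', hy', z', hz', hxy, hxz, hyz⟩
        obtain ⟨x, hx, rfl⟩ := Finset.mem_image.mp hx'
        obtain ⟨y, hy, rfl⟩ := Finset.mem_image.mp hy'
        obtain ⟨z, hz, rfl⟩ := Finset.mem_image.mp hz'
        have hxq : x ≠ q := fun h => hqP (h ▸ hx)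
        have hyq : y ≠ q := fun h => hqP (h ▸ hy)
        have hzq : z ≠ q := fun h => hqP (h ▸ hz)
        have hxM := hP x hx
        have hyM := hP y hy
        have hzM := hP z hz
        refine htf ⟨x, hx, y, hy, z, hz, ?_, ?_, ?_⟩
        · exact ⟨le_trans hxy.1 (hmono x y hxM hyM hxq hyq),
            le_trans hxy.2 (hmono y x hyM hxM hyq hxq)⟩
        · exact ⟨le_trans hxz.1 (hmono x z hxM hzM hxq hzq),
            le_trans hxz.2 (hmono z x hzM hxM hzq hxq)⟩
        · exact ⟨le_trans hyz.1 (hmono y z hyM hzM hyq hzq),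
            le_trans hyz.2 (hmono z y hzM hyM hzq hyq)⟩)
      omega


lemma mod_two_cases {a m : ℕ} (hm : 0 < m) (h : a < 2 * m) :
    a % m = a ∨ (m ≤ a ∧ a % m = a - m) := by
  rcases lt_or_ge a m with h1 | h1
  · exact Or.inl (Nat.mod_eq_of_lt h1)
  · right
    refine ⟨h1, ?_⟩
    rw [Nat.mod_eq_sub_mod h1, Nat.mod_eq_of_lt (by omega)]

def arc (m s : ℕ) [NeZero m] (i : Fin m) : Finset (Fin m) :=
  (Finset.range s).image (fun t : ℕ => i + (t : Fin m))

lemma card_arc (m s : ℕ) [NeZero m] (hsm : s ≤ m) (i : Fin m) : (arc m s i).card = s := by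
  rw [arc, Finset.card_image_of_injOn, Finset.card_range]
  intro t ht t' ht' h
  rw [Finset.mem_coe, Finset.mem_range] at ht ht'
  have h0 := add_left_cancel h
  have h1 : ((t : ℕ) : Fin m).val = ((t' : ℕ) : Fin m).val := by rw [h0]
  rwa [Fin.val_cast_of_lt (lt_of_lt_of_le ht hsm),
    Fin.val_cast_of_lt (lt_of_lt_of_le ht' hsm)] at h1

lemma disjoint_arc_of_sep (m s : ℕ) [NeZero m] (hsm : s ≤ m) {i j : Fin m}
    (h : sep m s i.val j.val) : Disjoint (arc m s i) (arc m s j) := by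
  rw [Finset.disjoint_left]
  intro a hai haj
  rw [arc, Finset.mem_image] at hai haj
  obtain ⟨t, ht, hta⟩ := hai
  obtain ⟨t', ht', hta'⟩ := haj
  rw [Finset.mem_range] at ht ht'
  have hm : 0 < m := Nat.pos_of_ne_zero (NeZero.ne m)
  have hv : (i.val + t) % m = (j.val + t') % m := by
    have h1 : (i + (t : Fin m)).val = (j + (t' : Fin m)).val := by rw [hta, hta']
    rwa [Fin.add_def, Fin.add_def, Fin.val_cast_of_lt (by omega),
      Fin.val_cast_of_lt (by omega)] at h1
  obtain ⟨hs1, hs2⟩ := h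
  have hi := i.isLt
  have hj := j.isLt
  unfold cgap at hs1 hs2
  rcases mod_two_cases hm (a := i.val + t) (by omega) with h1 | h1 <;>
    rcases mod_two_cases hm (a := j.val + t') (by omega) with h2 | h2 <;>
    split_ifs at hs1 hs2 <;> omega

lemma key_mem {β γ : Type*} [DecidableEq γ] (f : β ≃ γ) {I : Finset β} {A : Finset γ}
    (hf : I.image f = A) : ∀ x, x ∈ I ↔ f x ∈ A := by
  intro x
  constructor
  · intro hx
    rw [← hf]
    exact Finset.mem_image_of_mem f hx
  · intro hx
    rw [← hf] at hx
    obtain ⟨y, hy, hyx⟩ := Finset.mem_image.mp hx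
    rwa [← f.injective hyx]

def permRestrict {β γ : Type*} [DecidableEq β] [DecidableEq γ] (I : Finset β) (A : Finset γ) :
    {f : β ≃ γ // I.image f = A} ≃ ((↥I ≃ ↥A) × ({x : β // x ∉ I} ≃ {y : γ // y ∉ A})) where
  toFun fp :=
    (Equiv.subtypeEquiv fp.1 (key_mem fp.1 fp.2),
     Equiv.subtypeEquiv fp.1 (fun x => not_iff_not.mpr (key_mem fp.1 fp.2 x)))
  invFun gh := by
    refine ⟨(Equiv.sumCompl (· ∈ I)).symm.trans ((gh.1.sumCongr gh.2).trans
      (Equiv.sumCompl (· ∈ A))), ?_⟩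
    have hIA : I.card = A.card := by
      have := Fintype.card_congr gh.1
      simpa using this
    have hsub : I.image ((Equiv.sumCompl (· ∈ I)).symm.trans ((gh.1.sumCongr gh.2).trans
        (Equiv.sumCompl (· ∈ A)))) ⊆ A := by
      intro a ha
      obtain ⟨x, hx, rfl⟩ := Finset.mem_image.mp ha
      simp only [Equiv.trans_apply, Equiv.sumCompl_symm_apply_of_pos (p := (· ∈ I)) hx,
        Equiv.sumCongr_apply, Sum.map_inl, Equiv.sumCompl_apply_inl]
      exact (gh.1 ⟨x, hx⟩).2
    apply Finset.eq_of_subset_of_card_le hsub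
    rw [Finset.card_image_of_injective _ (Equiv.injective _)]
    omega
  left_inv := by
    rintro ⟨f, hf⟩
    apply Subtype.ext
    apply Equiv.ext
    intro x
    by_cases hx : x ∈ I
    · simp [Equiv.sumCompl_symm_apply_of_pos (p := (· ∈ I)) hx]
    · simp [Equiv.sumCompl_symm_apply_of_neg (p := (· ∈ I)) hx]
  right_inv := by
    rintro ⟨g, h⟩
    ext x
    · rcases x with ⟨x, hx⟩
      simp [Equiv.sumCompl_symm_apply_of_pos (p := (· ∈ I)) hx]
    · rcases x with ⟨x, hx⟩
      simp [Equiv.sumCompl_symm_apply_of_neg (p := (· ∈ I)) hx]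

lemma card_perm_image {β γ : Type*} [DecidableEq β] [DecidableEq γ] [Fintype β] [Fintype γ]
    (I : Finset β) (A : Finset γ) (hIA : I.card = A.card)
    (hbg : Fintype.card β = Fintype.card γ) :
    (Finset.univ.filter (fun f : β ≃ γ => I.image f = A)).card
      = I.card.factorial * (Fintype.card β - I.card).factorial := by
  rw [← Fintype.card_subtype]
  rw [Fintype.card_congr (permRestrict I A)]
  rw [Fintype.card_prod]
  have e1 : Fintype.card ↥I = Fintype.card ↥A := by
    simp [Fintype.card_coe, hIA]
  have e2 : Fintype.card {x : β // x ∉ I} = Fintype.card {y : γ // y ∉ A} := by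
    simp only [Fintype.card_subtype_compl, Fintype.card_coe, hIA, hbg]
  rw [Fintype.card_equiv (Fintype.equivOfCardEq e1), Fintype.card_equiv (Fintype.equivOfCardEq e2)]
  simp [Fintype.card_coe, Fintype.card_subtype_compl]

theorem frankl_nu_two (α : Type*) [Fintype α] [DecidableEq α] (s : ℕ)
    (hs : 1 ≤ s) (hm : 3 * s ≤ Fintype.card α)
    (F : Finset (Finset α)) (hF : ∀ A ∈ F, A.card = s)
    (htf : ¬ ∃ A ∈ F, ∃ B ∈ F, ∃ C ∈ F, Disjoint A B ∧ Disjoint A C ∧ Disjoint B C) :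
    F.card ≤ 2 * ((Fintype.card α - 1).choose (s - 1)) := by
  set m := Fintype.card α with hmdef
  haveI : NeZero m := ⟨by omega⟩
  have hsm : s ≤ m := by omega
  set E := (Finset.univ : Finset ((Fin m ≃ α) × Fin m)).filter
      (fun z => (arc m s z.2).image z.1 ∈ F) with hE
  have bound : ∀ f : Fin m ≃ α,
      (Finset.univ.filter (fun i : Fin m => (arc m s i).image f ∈ F)).card ≤ 2 * s := by
    intro f
    set Q := Finset.univ.filter (fun i : Fin m => (arc m s i).image f ∈ F) with hQ
    have hcard : (Q.image Fin.val).card = Q.card :=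
      Finset.card_image_of_injective _ Fin.val_injective
    rw [← hcard]
    apply lemmaA s hs m hm
    · intro p hp
      obtain ⟨i, _, rfl⟩ := Finset.mem_image.mp hp
      exact i.isLt
    · rintro ⟨x, hx, y, hy, z, hz, hxy, hxz, hyz⟩
      obtain ⟨i, hi, rfl⟩ := Finset.mem_image.mp hx
      obtain ⟨j, hj, rfl⟩ := Finset.mem_image.mp hy
      obtain ⟨l, hl, rfl⟩ := Finset.mem_image.mp hz
      rw [hQ, Finset.mem_filter] at hi hj hl
      refine htf ⟨(arc m s i).image f, hi.2, (arc m s j).image f, hj.2,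
        (arc m s l).image f, hl.2, ?_, ?_, ?_⟩
      · exact (Finset.disjoint_image f.injective).mpr (disjoint_arc_of_sep m s hsm hxy)
      · exact (Finset.disjoint_image f.injective).mpr (disjoint_arc_of_sep m s hsm hxz)
      · exact (Finset.disjoint_image f.injective).mpr (disjoint_arc_of_sep m s hsm hyz)
  have way1 : E.card ≤ m.factorial * (2 * s) := by
    have h1 : E.card = ∑ f : Fin m ≃ α,
        (Finset.univ.filter (fun i : Fin m => (arc m s i).image f ∈ F)).card := by
      rw [hE, Finset.card_filter, ← Finset.univ_product_univ, Finset.sum_product]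
      refine Finset.sum_congr rfl (fun f _ => ?_)
      rw [Finset.card_filter]
    rw [h1]
    calc ∑ f : Fin m ≃ α,
        (Finset.univ.filter (fun i : Fin m => (arc m s i).image f ∈ F)).card
        ≤ ∑ _f : Fin m ≃ α, 2 * s := Finset.sum_le_sum (fun f _ => bound f)
      _ = Fintype.card (Fin m ≃ α) * (2 * s) := by
          rw [Finset.sum_const, Finset.card_univ, smul_eq_mul]
      _ = m.factorial * (2 * s) := by
          rw [Fintype.card_equiv (Fintype.equivOfCardEq (by simp [hmdef]))]
          simp
  have way2 : E.card = F.card * (m * (s.factorial * (m - s).factorial)) := by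
    have h1 : E.card = ∑ A ∈ F, (E.filter (fun z => (arc m s z.2).image z.1 = A)).card :=
      Finset.card_eq_sum_card_fiberwise (fun z hz => (Finset.mem_filter.mp hz).2)
    rw [h1]
    have h2 : ∀ A ∈ F, (E.filter (fun z => (arc m s z.2).image z.1 = A)).card
        = m * (s.factorial * (m - s).factorial) := by
      intro A hA
      have hfe : E.filter (fun z => (arc m s z.2).image z.1 = A)
          = Finset.univ.filter (fun z : (Fin m ≃ α) × Fin m =>
              (arc m s z.2).image z.1 = A) := by
        rw [hE, Finset.filter_filter]
        apply Finset.filter_congr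
        intro z _
        constructor
        · rintro ⟨_, h⟩
          exact h
        · intro h
          exact ⟨h ▸ hA, h⟩
      rw [hfe, Finset.card_filter, ← Finset.univ_product_univ, Finset.sum_product_right]
      have h3 : ∀ i : Fin m, (∑ f : Fin m ≃ α,
          if (arc m s i).image f = A then 1 else 0)
          = s.factorial * (m - s).factorial := by
        intro i
        rw [← Finset.card_filter]
        have := card_perm_image (arc m s i) A
          (by rw [card_arc m s hsm, hF A hA]) (by simp [hmdef])
        rw [this, card_arc m s hsm]
        simp
      rw [Finset.sum_congr rfl (fun i _ => h3 i), Finset.sum_const, Finset.card_univ]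
      simp
    rw [Finset.sum_congr rfl h2, Finset.sum_const, smul_eq_mul]
  have hm0 : 0 < m := by omega
  have hfact : m.factorial * (2 * s)
      = (2 * ((m - 1).choose (s - 1))) * (m * (s.factorial * (m - s).factorial)) := by
    have h1 : m.factorial = m * (m - 1).factorial := by
      conv_lhs => rw [show m = (m - 1) + 1 by omega]
      rw [Nat.factorial_succ]
      congr 1
      omega
    have h2 : (m - 1).choose (s - 1) * (s - 1).factorial * ((m - 1) - (s - 1)).factorial
        = (m - 1).factorial := Nat.choose_mul_factorial_mul_factorial (by omega)
    have h3 : (m - 1) - (s - 1) = m - s := by omega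
    have h4 : s.factorial = s * (s - 1).factorial := by
      conv_lhs => rw [show s = (s - 1) + 1 by omega]
      rw [Nat.factorial_succ]
      congr 1
      omega
    rw [h1, ← h2, h3, h4]
    ring
  have hX : 0 < m * (s.factorial * (m - s).factorial) :=
    Nat.mul_pos hm0 (Nat.mul_pos s.factorial_pos (m - s).factorial_pos)
  have : F.card * (m * (s.factorial * (m - s).factorial))
      ≤ (2 * ((m - 1).choose (s - 1))) * (m * (s.factorial * (m - s).factorial)) := by
    rw [← way2, ← hfact]
    exact way1
  exact Nat.le_of_mul_le_mul_right this hX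

end FranklAux


/-- level bound for triangle-free subsets of the `r`-distance graph
(via shadows at level `k - r/2` and Frankl's matching theorem):
`C(k, r/2) · S_k ≤ 2 · C(n, k - r/2) · C(n - k + r/2 - 1, r/2 - 1)`. -/
theorem level_bound_r_distance
    (n r k : ℕ) (hr : 0 < r) (hre : Even r) (hrn : 2 * r ≤ n)
    (hk1 : r / 2 < k) (hk2 : 2 * k ≤ n) (S : Finset (Fin n → Bool))
    (htf : ∀ u ∈ S, ∀ v ∈ S, ∀ w ∈ S, u ≠ v → u ≠ w → v ≠ w →
      ¬(hammingDist u v = r ∧ hammingDist u w = r ∧ hammingDist v w = r)) :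
    k.choose (r / 2) * (S.filter
        (fun v => (Finset.univ.filter (fun i : Fin n => v i = true)).card = k)).card
      ≤ 2 * n.choose (k - r / 2) * (n - k + r / 2 - 1).choose (r / 2 - 1) := by
  classical
  set s := r / 2 with hsdef
  have hr2 : r = 2 * s := by
    obtain ⟨t, ht⟩ := hre
    omega
  have hs1 : 1 ≤ s := by omega
  have hsk : s < k := hk1
  have hkn : k ≤ n := by omega
  have hk2s : k + 2 * s ≤ n := by omega
  set Sk := S.filter
      (fun v => (Finset.univ.filter (fun i : Fin n => v i = true)).card = k) with hSk
  set supp : (Fin n → Bool) → Finset (Fin n) :=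
    fun v => Finset.univ.filter (fun i => v i = true) with hsupp
  have hmemSk : ∀ v, v ∈ Sk ↔ v ∈ S ∧ (supp v).card = k := by
    intro v
    rw [hSk, Finset.mem_filter]
  have suppinj : ∀ v w : Fin n → Bool, supp v = supp w → v = w := by
    intro v w h
    funext i
    have h1 : (i ∈ supp v) = (i ∈ supp w) := by rw [h]
    simp only [hsupp, Finset.mem_filter, Finset.mem_univ, true_and, eq_iff_iff] at h1
    cases hv : v i <;> cases hw : w i
    · rfl
    · exact absurd (h1.mpr hw) (by simp [hv])
    · exact absurd (h1.mp hv) (by simp [hw])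
    · rfl
  have hamm : ∀ v w : Fin n → Bool,
      hammingDist v w = (Finset.univ.filter (fun i => v i ≠ w i)).card := fun _ _ => rfl
  -- the per-shadow bound
  have key : ∀ T ∈ (Finset.univ : Finset (Fin n)).powersetCard (k - s),
      (Sk.filter (fun v => T ⊆ supp v)).card ≤ 2 * ((n - (k - s) - 1).choose (s - 1)) := by
    intro T hT
    rw [Finset.mem_powersetCard] at hT
    obtain ⟨-, hTcard⟩ := hT
    set V := (Finset.univ : Finset (Fin n)) \ T with hV
    have hVcard : Fintype.card {x // x ∈ V} = n - (k - s) := by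
      rw [Fintype.card_coe, hV, Finset.card_sdiff_of_subset (Finset.subset_univ T), Finset.card_univ,
        Fintype.card_fin, hTcard]
    have hsubV : ∀ v ∈ Sk.filter (fun v => T ⊆ supp v), supp v \ T ⊆ V := by
      intro v _ x hx
      rw [hV, Finset.mem_sdiff]
      exact ⟨Finset.mem_univ x, (Finset.mem_sdiff.mp hx).2⟩
    have hcard_e : ∀ v ∈ Sk.filter (fun v => T ⊆ supp v), (supp v \ T).card = s := by
      intro v hv
      rw [Finset.mem_filter] at hv
      rw [Finset.card_sdiff_of_subset hv.2, ((hmemSk v).mp hv.1).2, hTcard]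
      omega
    set G : Finset (Finset {x // x ∈ V}) := (Sk.filter (fun v => T ⊆ supp v)).image
        (fun v => (supp v \ T).subtype (fun x => x ∈ V)) with hG
    have hmapback : ∀ v ∈ Sk.filter (fun v => T ⊆ supp v),
        ((supp v \ T).subtype (fun x => x ∈ V)).map (Function.Embedding.subtype _)
          = supp v \ T := by
      intro v hv
      exact Finset.subtype_map_of_mem (hsubV v hv)
    have hinj : Set.InjOn (fun v => (supp v \ T).subtype (fun x => x ∈ V))
        (Sk.filter (fun v => T ⊆ supp v)) := by
      intro v hv w hw h
      simp only at h
      have h2 : supp v \ T = supp w \ T := by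
        rw [← hmapback v hv, ← hmapback w hw, h]
      apply suppinj
      have hv2 := (Finset.mem_filter.mp hv).2
      have hw2 := (Finset.mem_filter.mp hw).2
      rw [← Finset.sdiff_union_of_subset hv2, ← Finset.sdiff_union_of_subset hw2, h2]
    have hcardG : G.card = (Sk.filter (fun v => T ⊆ supp v)).card := by
      rw [hG]
      exact Finset.card_image_of_injOn hinj
    have hGcards : ∀ A ∈ G, A.card = s := by
      intro A hA
      rw [hG] at hA
      obtain ⟨v, hv, rfl⟩ := Finset.mem_image.mp hA
      have := congrArg Finset.card (hmapback v hv)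
      rw [Finset.card_map] at this
      rw [this, hcard_e v hv]
    have hGtf : ¬ ∃ A ∈ G, ∃ B ∈ G, ∃ C ∈ G, Disjoint A B ∧ Disjoint A C ∧ Disjoint B C := by
      rintro ⟨A, hA, B, hB, C, hC, hAB, hAC, hBC⟩
      obtain ⟨v₁, hv₁, rfl⟩ := Finset.mem_image.mp hA
      obtain ⟨v₂, hv₂, rfl⟩ := Finset.mem_image.mp hB
      obtain ⟨v₃, hv₃, rfl⟩ := Finset.mem_image.mp hC
      have hd12 : Disjoint (supp v₁ \ T) (supp v₂ \ T) := by
        rw [← hmapback v₁ hv₁, ← hmapback v₂ hv₂]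
        exact Finset.disjoint_map _ |>.mpr hAB
      have hd13 : Disjoint (supp v₁ \ T) (supp v₃ \ T) := by
        rw [← hmapback v₁ hv₁, ← hmapback v₃ hv₃]
        exact Finset.disjoint_map _ |>.mpr hAC
      have hd23 : Disjoint (supp v₂ \ T) (supp v₃ \ T) := by
        rw [← hmapback v₂ hv₂, ← hmapback v₃ hv₃]
        exact Finset.disjoint_map _ |>.mpr hBC
      -- distances
      have hdist : ∀ v w : Fin n → Bool, v ∈ Sk.filter (fun v => T ⊆ supp v) →
          w ∈ Sk.filter (fun v => T ⊆ supp v) →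
          Disjoint (supp v \ T) (supp w \ T) → hammingDist v w = r := by
        intro v w hv hw hd
        have hvT := (Finset.mem_filter.mp hv).2
        have hwT := (Finset.mem_filter.mp hw).2
        rw [hamm]
        have hset : Finset.univ.filter (fun i => v i ≠ w i)
            = (supp v \ T) ∪ (supp w \ T) := by
          ext i
          simp only [Finset.mem_filter, Finset.mem_univ, true_and, Finset.mem_union,
            Finset.mem_sdiff]
          have hiv : i ∈ supp v ↔ v i = true := by
            simp [hsupp]
          have hiw : i ∈ supp w ↔ w i = true := by
            simp [hsupp]
          constructor
          · intro hne
            cases hvi : v i <;> cases hwi : w i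
            · simp [hvi, hwi] at hne
            · have hiw' : i ∈ supp w := hiw.mpr hwi
              have hiv' : i ∉ supp v := fun hc => by simp [hiv.mp hc] at hvi
              have hiT : i ∉ T := fun hc => hiv' (hvT hc)
              exact Or.inr ⟨hiw', hiT⟩
            · have hiv' : i ∈ supp v := hiv.mpr hvi
              have hiw' : i ∉ supp w := fun hc => by simp [hiw.mp hc] at hwi
              have hiT : i ∉ T := fun hc => hiw' (hwT hc)
              exact Or.inl ⟨hiv', hiT⟩
            · simp [hvi, hwi] at hne
          · intro hor
            rcases hor with ⟨hiv', hiT⟩ | ⟨hiw', hiT⟩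
            · have h1 : v i = true := hiv.mp hiv'
              have h2 : i ∉ supp w := by
                intro hc
                have h3 : i ∈ supp w \ T := Finset.mem_sdiff.mpr ⟨hc, hiT⟩
                exact (Finset.disjoint_left.mp hd (Finset.mem_sdiff.mpr ⟨hiv', hiT⟩)) h3
              have h4 : w i = false := by
                cases hwi : w i
                · rfl
                · exact absurd (hiw.mpr hwi) h2
              rw [h1, h4]
              simp
            · have h1 : w i = true := hiw.mp hiw'
              have h2 : i ∉ supp v := by
                intro hc
                have h3 : i ∈ supp v \ T := Finset.mem_sdiff.mpr ⟨hc, hiT⟩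
                exact (Finset.disjoint_left.mp hd h3) (Finset.mem_sdiff.mpr ⟨hiw', hiT⟩)
              have h4 : v i = false := by
                cases hvi : v i
                · rfl
                · exact absurd (hiv.mpr hvi) h2
              rw [h1, h4]
              simp
        rw [hset, Finset.card_union_of_disjoint hd, hcard_e v hv, hcard_e w hw]
        omega
      have hne : ∀ v w, v ∈ Sk.filter (fun v => T ⊆ supp v) →
          w ∈ Sk.filter (fun v => T ⊆ supp v) →
          Disjoint (supp v \ T) (supp w \ T) → v ≠ w := by
        intro v w hv hw hd heq
        subst heq
        rw [disjoint_self, Finset.bot_eq_empty] at hd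
        have hce := hcard_e v hv
        rw [hd, Finset.card_empty] at hce
        omega
      have hS1 : v₁ ∈ S := ((hmemSk v₁).mp (Finset.mem_filter.mp hv₁).1).1
      have hS2 : v₂ ∈ S := ((hmemSk v₂).mp (Finset.mem_filter.mp hv₂).1).1
      have hS3 : v₃ ∈ S := ((hmemSk v₃).mp (Finset.mem_filter.mp hv₃).1).1
      exact htf v₁ hS1 v₂ hS2 v₃ hS3 (hne v₁ v₂ hv₁ hv₂ hd12) (hne v₁ v₃ hv₁ hv₃ hd13)
        (hne v₂ v₃ hv₂ hv₃ hd23)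
        ⟨hdist v₁ v₂ hv₁ hv₂ hd12, hdist v₁ v₃ hv₁ hv₃ hd13, hdist v₂ v₃ hv₂ hv₃ hd23⟩
    have hfrankl := FranklAux.frankl_nu_two {x // x ∈ V} s hs1 (by rw [hVcard]; omega)
      G hGcards hGtf
    rw [hVcard] at hfrankl
    rw [← hcardG]
    exact hfrankl
  -- double counting over shadows
  have count : (k.choose s) * Sk.card
      = ∑ T ∈ (Finset.univ : Finset (Fin n)).powersetCard (k - s),
          (Sk.filter (fun v => T ⊆ supp v)).card := by
    have h1 : ∀ T : Finset (Fin n), (Sk.filter (fun v => T ⊆ supp v)).card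
        = ∑ v ∈ Sk, if T ⊆ supp v then 1 else 0 := fun T => Finset.card_filter _ _
    rw [Finset.sum_congr rfl (fun T _ => h1 T), Finset.sum_comm]
    have h2 : ∀ v ∈ Sk, (∑ T ∈ (Finset.univ : Finset (Fin n)).powersetCard (k - s),
        if T ⊆ supp v then 1 else 0) = k.choose s := by
      intro v hv
      rw [← Finset.card_filter]
      have h3 : ((Finset.univ : Finset (Fin n)).powersetCard (k - s)).filter
          (fun T => T ⊆ supp v) = (supp v).powersetCard (k - s) := by
        ext X
        simp only [Finset.mem_filter, Finset.mem_powersetCard, Finset.subset_univ, true_and]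
        tauto
      rw [h3, Finset.card_powersetCard, ((hmemSk v).mp hv).2]
      rw [show k.choose (k - s) = k.choose s by
        rw [← Nat.choose_symm (by omega : k - s ≤ k)]
        congr 1
        omega]
    rw [Finset.sum_congr rfl h2, Finset.sum_const, smul_eq_mul, mul_comm]
  calc k.choose s * Sk.card
      = ∑ T ∈ (Finset.univ : Finset (Fin n)).powersetCard (k - s),
          (Sk.filter (fun v => T ⊆ supp v)).card := count
    _ ≤ ∑ _T ∈ (Finset.univ : Finset (Fin n)).powersetCard (k - s),
          2 * ((n - (k - s) - 1).choose (s - 1)) := Finset.sum_le_sum key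
    _ = n.choose (k - s) * (2 * ((n - (k - s) - 1).choose (s - 1))) := by
        rw [Finset.sum_const, smul_eq_mul, Finset.card_powersetCard, Finset.card_univ,
          Fintype.card_fin]
    _ = 2 * n.choose (k - s) * ((n - k + s - 1).choose (s - 1)) := by
        rw [show n - (k - s) - 1 = n - k + s - 1 by omega]
        ring
end

section
/- Let r be a positive even integer with 2r ≤ n. Then any triangle-free subset S of the r-distance graph of the n-dimensional hypercube satisfies |S| ≤ 2 · (Σ_{i=0}^{r/2} C(n, i)) + 4r · 2^n / (n + 1), where C(a,b) denotes the binomial coefficient. -/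
/-- The set of coordinates of `Fin n` lying in the `i`-th block of size `h` has
cardinality `h`, provided `i < n / h`. -/
lemma block_card_aux (n h i : ℕ) (hh : 0 < h) (hi : i < n / h) :
    (Finset.univ.filter (fun c : Fin n => c.val / h = i)).card = h := by
  have hle : i * h + h ≤ n := by
    have h1 : (i + 1) * h ≤ (n / h) * h := Nat.mul_le_mul_right h hi
    have h2 : (n / h) * h ≤ n := Nat.div_mul_le_self n h
    calc i * h + h = (i + 1) * h := by ring
      _ ≤ n := le_trans h1 h2
  have hcard : (Finset.univ.filter (fun c : Fin n => c.val / h = i)).card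
      = (Finset.Ico (i * h) (i * h + h)).card := by
    apply Finset.card_bij (fun c _ => c.val)
    · intro c hc
      have hc' : c.val / h = i := (Finset.mem_filter.mp hc).2
      have h1 : i * h + c.val % h = c.val := by
        conv_rhs => rw [← Nat.div_add_mod c.val h]
        rw [hc', Nat.mul_comm]
      have h2 : c.val % h < h := Nat.mod_lt _ hh
      exact Finset.mem_Ico.mpr ⟨by omega, by omega⟩
    · intro a _ b _ hab
      exact Fin.val_injective hab
    · intro b hb
      rw [Finset.mem_Ico] at hb
      have hbn : b < n := by omega
      refine ⟨⟨b, hbn⟩, Finset.mem_filter.mpr ⟨Finset.mem_univ _, ?_⟩, rfl⟩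
      show b / h = i
      have hb' : b = h * i + (b - i * h) := by
        have hcomm : h * i = i * h := Nat.mul_comm h i
        omega
      rw [hb', Nat.mul_add_div hh, Nat.div_eq_of_lt (by omega), add_zero]
  rw [hcard, Nat.card_Ico]
  omega

/-- when `2r ≤ n` (`r` positive and even), every triangle-free subset `S`
of the `r`-distance graph of the hypercube satisfies
`|S| ≤ 2 · (Σ_{i=0}^{r/2} C(n,i)) + 4r · 2^n / (n+1)`. -/
theorem triangle_free_r_distance_upper_bound
    (n r : ℕ) (hr : 0 < r) (hre : Even r) (hrn : 2 * r ≤ n)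
    (S : Finset (Fin n → Bool))
    (htf : ∀ u ∈ S, ∀ v ∈ S, ∀ w ∈ S, u ≠ v → u ≠ w → v ≠ w →
      ¬(hammingDist u v = r ∧ hammingDist u w = r ∧ hammingDist v w = r)) :
    (S.card : ℝ) ≤ 2 * (∑ i ∈ Finset.range (r / 2 + 1), (n.choose i : ℝ))
      + 4 * r * 2 ^ n / (n + 1) := by
  classical
  obtain ⟨h, hh⟩ := hre
  have hhpos : 0 < h := by omega
  set m := n / h with hm
  -- the flip map: flip `y` on block `i`
  set F : (Fin n → Bool) → ℕ → (Fin n → Bool) :=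
    fun y i c => xor (decide (c.val / h = i)) (y c) with hF
  have Finv : ∀ (y : Fin n → Bool) (i : ℕ), F (F y i) i = y := by
    intro y i
    funext c
    simp [hF]
  -- distance between two flips
  have hdist : ∀ (y : Fin n → Bool) (i j : ℕ), i < m → j < m → i ≠ j →
      hammingDist (F y i) (F y j) = r := by
    intro y i j hi hj hij
    have heq : hammingDist (F y i) (F y j)
        = (Finset.univ.filter (fun c : Fin n => c.val / h = i ∨ c.val / h = j)).card := by
      show (Finset.univ.filter (fun c => F y i c ≠ F y j c)).card = _
      congr 1
      apply Finset.filter_congr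
      intro c _
      simp only [hF, ne_eq, Bool.xor_left_inj, decide_eq_decide]
      constructor
      · intro hne
        by_cases h1 : c.val / h = i
        · exact Or.inl h1
        · by_cases h2 : c.val / h = j
          · exact Or.inr h2
          · exact absurd (iff_of_false h1 h2) hne
      · intro hor hiff
        rcases hor with h1 | h1
        · exact hij (h1 ▸ (hiff.mp h1))
        · exact hij ((hiff.mpr h1) ▸ h1)
    rw [heq, Finset.filter_or, Finset.card_union_of_disjoint, block_card_aux n h i hhpos hi,
      block_card_aux n h j hhpos hj]
    · omega
    · rw [Finset.disjoint_filter]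
      intro c _ h1 h2
      exact hij (h1 ▸ h2)
  -- distinct flips
  have Fne : ∀ (y : Fin n → Bool) (i j : ℕ), i < m → j < m → i ≠ j → F y i ≠ F y j := by
    intro y i j hi hj hij heq
    have := hdist y i j hi hj hij
    rw [heq] at this
    simp [hammingDist_eq_zero] at this
    omega
  -- for each i, flipping block i is a bijection, so the count is |S|
  have count1 : ∀ i ∈ Finset.range m,
      (Finset.univ.filter (fun y : Fin n → Bool => F y i ∈ S)).card = S.card := by
    intro i _
    apply Finset.card_bij (fun y _ => F y i)
    · intro y hy
      exact (Finset.mem_filter.mp hy).2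
    · intro a _ b _ hab
      have := congrArg (fun z => F z i) hab
      simpa only [Finv] using this
    · intro s hs
      exact ⟨F s i, Finset.mem_filter.mpr ⟨Finset.mem_univ _, by rw [Finv]; exact hs⟩, Finv s i⟩
  -- each "clique" contains at most two points of S
  have count2 : ∀ y : Fin n → Bool,
      ((Finset.range m).filter (fun i => F y i ∈ S)).card ≤ 2 := by
    intro y
    by_contra hc
    push_neg at hc
    obtain ⟨a, b, c, ha, hb, hcmem, hab, hac, hbc⟩ := Finset.two_lt_card_iff.mp hc
    simp only [Finset.mem_filter, Finset.mem_range] at ha hb hcmem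
    exact htf (F y a) ha.2 (F y b) hb.2 (F y c) hcmem.2
      (Fne y a b ha.1 hb.1 hab) (Fne y a c ha.1 hcmem.1 hac) (Fne y b c hb.1 hcmem.1 hbc)
      ⟨hdist y a b ha.1 hb.1 hab, hdist y a c ha.1 hcmem.1 hac, hdist y b c hb.1 hcmem.1 hbc⟩
  -- double counting
  have key : m * S.card ≤ 2 * 2 ^ n := by
    calc m * S.card = ∑ _i ∈ Finset.range m, S.card := by
          rw [Finset.sum_const, Finset.card_range, smul_eq_mul]
      _ = ∑ i ∈ Finset.range m,
            (Finset.univ.filter (fun y : Fin n → Bool => F y i ∈ S)).card :=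
          (Finset.sum_congr rfl (fun i hi => (count1 i hi).symm))
      _ = ∑ i ∈ Finset.range m, ∑ y : Fin n → Bool, (if F y i ∈ S then 1 else 0) := by
          simp only [Finset.card_filter]
      _ = ∑ y : Fin n → Bool, ∑ i ∈ Finset.range m, (if F y i ∈ S then 1 else 0) :=
          Finset.sum_comm
      _ = ∑ y : Fin n → Bool, ((Finset.range m).filter (fun i => F y i ∈ S)).card := by
          simp only [Finset.card_filter]
      _ ≤ ∑ _y : Fin n → Bool, 2 := Finset.sum_le_sum (fun y _ => count2 y)
      _ = 2 ^ n * 2 := by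
          rw [Finset.sum_const, smul_eq_mul, Finset.card_univ, Fintype.card_fun,
            Fintype.card_bool, Fintype.card_fin]
      _ = 2 * 2 ^ n := mul_comm _ _
  -- arithmetic: n + 1 ≤ 2 * r * m
  have h4 : n + 1 ≤ 2 * r * m := by
    have hrw : 2 * r * m = 4 * (h * m) := by
      have : r = 2 * h := by omega
      rw [this]; ring
    rw [hrw]
    have e : h * m + n % h = n := by rw [hm]; exact Nat.div_add_mod n h
    have hlt : n % h < h := Nat.mod_lt _ hhpos
    have h4h : 4 * h ≤ n := by omega
    generalize n % h = s at e hlt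
    generalize h * m = a at e
    omega
  -- combine in ℕ
  have hN : (n + 1) * S.card ≤ 4 * r * 2 ^ n := by
    calc (n + 1) * S.card ≤ (2 * r * m) * S.card := Nat.mul_le_mul_right _ h4
      _ = 2 * r * (m * S.card) := by ring
      _ ≤ 2 * r * (2 * 2 ^ n) := Nat.mul_le_mul_left _ key
      _ = 4 * r * 2 ^ n := by ring
  -- cast to ℝ
  have hterm2 : (S.card : ℝ) ≤ 4 * r * 2 ^ n / (n + 1) := by
    rw [le_div_iff₀ (by positivity : (0 : ℝ) < (n : ℝ) + 1)]
    have hcast : ((n : ℝ) + 1) * (S.card : ℝ) ≤ 4 * (r : ℝ) * 2 ^ n := by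
      exact_mod_cast hN
    linarith
  have hterm1 : (0 : ℝ) ≤ 2 * (∑ i ∈ Finset.range (r / 2 + 1), (n.choose i : ℝ)) := by
    positivity
  linarith
end

section
/- Let n ≥ 2 and let r be a positive even integer. Let S be the set of vertices of the n-dimensional hypercube having exactly r/2 coordinates equal to 1, at least one of which is in the first or second coordinate. Then S is triangle-free in the r-distance graph (no three distinct vertices of S are pairwise at Hamming distance exactly r), and |S| = C(n, r/2) − C(n−2, r/2), where C(a,b) denotes the binomial coefficient. -/
open Finset

lemma hd_key {n k : ℕ} {u v : Fin n → Bool}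
    (hu : (univ.filter (fun i => u i = true)).card = k)
    (hv : (univ.filter (fun i => v i = true)).card = k)
    (hd : hammingDist u v = 2 * k) :
    ∀ i, ¬(u i = true ∧ v i = true) := by
  set A := univ.filter (fun i => u i = true) with hA
  set B := univ.filter (fun i => v i = true) with hB
  have hsym : (univ.filter fun i => u i ≠ v i) = (A ∪ B) \ (A ∩ B) := by
    ext i
    simp only [hA, hB, mem_filter, mem_univ, true_and, mem_sdiff, mem_union, mem_inter]
    cases u i <;> cases v i <;> simp
  have hdist : hammingDist u v = (A ∪ B).card - (A ∩ B).card := by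
    rw [hammingDist, hsym, Finset.card_sdiff_of_subset (Finset.inter_subset_union)]
  have h2 : (A ∪ B).card + (A ∩ B).card = 2 * k := by
    rw [Finset.card_union_add_card_inter, hu, hv]; ring
  have hle : (A ∩ B).card ≤ (A ∪ B).card := Finset.card_le_card Finset.inter_subset_union
  have hint : (A ∩ B).card = 0 := by omega
  rintro i ⟨h1, h2'⟩
  have hi : i ∈ A ∩ B := by simp [hA, hB, h1, h2']
  rw [Finset.card_eq_zero] at hint
  simp [hint] at hi

lemma count_level (n k : ℕ) :
    (univ.filter fun v : Fin n → Bool =>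
      (univ.filter (fun i => v i = true)).card = k).card = n.choose k := by
  have hpc := Finset.card_powersetCard k (univ : Finset (Fin n))
  rw [Finset.card_univ, Fintype.card_fin] at hpc
  rw [← hpc]
  refine Finset.card_bij' (fun v _ => univ.filter (fun i => v i = true))
    (fun s _ => fun i => decide (i ∈ s)) ?_ ?_ ?_ ?_
  · intro v hv
    simp only [mem_filter, mem_univ, true_and] at hv
    simp [Finset.mem_powersetCard, hv]
  · intro s hs
    simp only [Finset.mem_powersetCard] at hs
    simp only [mem_filter, mem_univ, true_and]
    rw [show (univ.filter fun i => decide (i ∈ s) = true) = s by ext i; simp]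
    exact hs.2
  · intro v _; funext i; simp
  · intro s _; ext i; simp

lemma count_avoid (n k : ℕ) (hz : 0 < n) (ho : 1 < n) :
    (univ.filter fun v : Fin n → Bool =>
      ((univ.filter (fun i => v i = true)).card = k ∧
        v ⟨0, hz⟩ = false ∧ v ⟨1, ho⟩ = false)).card = (n - 2).choose k := by
  set z : Fin n := ⟨0, hz⟩
  set o : Fin n := ⟨1, ho⟩
  have hzo : z ≠ o := by
    simp only [z, o, ne_eq, Fin.mk.injEq]; omega
  set T : Finset (Fin n) := univ \ {z, o} with hT
  have hTc : T.card = n - 2 := by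
    rw [hT, Finset.card_sdiff_of_subset (by simp), Finset.card_univ, Fintype.card_fin,
      Finset.card_insert_of_notMem (by simp [hzo]), Finset.card_singleton]
  have hpc := Finset.card_powersetCard k T
  rw [hTc] at hpc
  rw [← hpc]
  refine Finset.card_bij' (fun v _ => univ.filter (fun i => v i = true))
    (fun s _ => fun i => decide (i ∈ s)) ?_ ?_ ?_ ?_
  · rintro v hv
    simp only [mem_filter, mem_univ, true_and] at hv
    obtain ⟨hc, h0, h1⟩ := hv
    simp only [Finset.mem_powersetCard]
    refine ⟨?_, hc⟩
    intro i hi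
    simp only [mem_filter, mem_univ, true_and] at hi
    simp only [hT, mem_sdiff, mem_univ, true_and, Finset.mem_insert, Finset.mem_singleton]
    rintro (rfl | rfl) <;> simp_all
  · intro s hs
    simp only [Finset.mem_powersetCard, hT, Finset.subset_iff, mem_sdiff, mem_univ, true_and,
      Finset.mem_insert, Finset.mem_singleton] at hs
    obtain ⟨hsub, hc⟩ := hs
    simp only [mem_filter, mem_univ, true_and]
    refine ⟨?_, ?_, ?_⟩
    · rw [show (univ.filter fun i => decide (i ∈ s) = true) = s by ext i; simp]
      exact hc
    · simp only [decide_eq_false_iff_not]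
      intro h'; exact (hsub h') (Or.inl rfl)
    · simp only [decide_eq_false_iff_not]
      intro h'; exact (hsub h') (Or.inr rfl)
  · intro v _; funext i; simp
  · intro s _; ext i; simp

/-- the set of level-`r/2` vertices of the hypercube having a `1` in the
first or second coordinate is triangle-free in the `r`-distance graph and has exactly
`C(n, r/2) - C(n-2, r/2)` elements. -/
theorem first_two_coordinates_construction
    (n r : ℕ) (hn : 2 ≤ n) (hr : 0 < r) (hre : Even r) :
    (∀ u ∈ Finset.univ.filter (fun v : Fin n → Bool =>
        (Finset.univ.filter (fun i : Fin n => v i = true)).card = r / 2 ∧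
        (v ⟨0, by omega⟩ = true ∨ v ⟨1, by omega⟩ = true)),
     ∀ v ∈ Finset.univ.filter (fun v : Fin n → Bool =>
        (Finset.univ.filter (fun i : Fin n => v i = true)).card = r / 2 ∧
        (v ⟨0, by omega⟩ = true ∨ v ⟨1, by omega⟩ = true)),
     ∀ w ∈ Finset.univ.filter (fun v : Fin n → Bool =>
        (Finset.univ.filter (fun i : Fin n => v i = true)).card = r / 2 ∧
        (v ⟨0, by omega⟩ = true ∨ v ⟨1, by omega⟩ = true)),
      u ≠ v → u ≠ w → v ≠ w →
      ¬(hammingDist u v = r ∧ hammingDist u w = r ∧ hammingDist v w = r)) ∧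
    (Finset.univ.filter (fun v : Fin n → Bool =>
        (Finset.univ.filter (fun i : Fin n => v i = true)).card = r / 2 ∧
        (v ⟨0, by omega⟩ = true ∨ v ⟨1, by omega⟩ = true))).card
      = n.choose (r / 2) - (n - 2).choose (r / 2) := by
  have hz : 0 < n := by omega
  have ho : 1 < n := by omega
  have hr2 : r = 2 * (r / 2) := by
    obtain ⟨m, hm⟩ := hre; omega
  constructor
  · intro u hu v hv w hw huv huw hvw hd
    obtain ⟨d1, d2, d3⟩ := hd
    simp only [Finset.mem_filter, Finset.mem_univ, true_and] at hu hv hw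
    obtain ⟨hcu, hu01⟩ := hu
    obtain ⟨hcv, hv01⟩ := hv
    obtain ⟨hcw, hw01⟩ := hw
    rw [hr2] at d1 d2 d3
    have k1 := hd_key hcu hcv d1
    have k2 := hd_key hcu hcw d2
    have k3 := hd_key hcv hcw d3
    rcases hu01 with h | h <;> rcases hv01 with h' | h' <;> rcases hw01 with h'' | h''
    · exact k1 _ ⟨h, h'⟩
    · exact k1 _ ⟨h, h'⟩
    · exact k2 _ ⟨h, h''⟩
    · exact k3 _ ⟨h', h''⟩
    · exact k3 _ ⟨h', h''⟩
    · exact k2 _ ⟨h, h''⟩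
    · exact k1 _ ⟨h, h'⟩
    · exact k1 _ ⟨h, h'⟩
  · have hsplit := Finset.card_filter_add_card_filter_not
      (s := (univ.filter fun v : Fin n → Bool =>
        (univ.filter (fun i => v i = true)).card = r / 2))
      (p := fun v : Fin n → Bool => v ⟨0, hz⟩ = true ∨ v ⟨1, ho⟩ = true)
    rw [Finset.filter_filter, Finset.filter_filter] at hsplit
    have h1 := count_level n (r / 2)
    show ((univ.filter fun v : Fin n → Bool =>
        (univ.filter (fun i => v i = true)).card = r / 2 ∧
        (v ⟨0, hz⟩ = true ∨ v ⟨1, ho⟩ = true))).card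
      = n.choose (r / 2) - (n - 2).choose (r / 2)
    have h2 : ((univ.filter fun v : Fin n → Bool =>
        (univ.filter (fun i => v i = true)).card = r / 2 ∧
        ¬(v ⟨0, hz⟩ = true ∨ v ⟨1, ho⟩ = true))).card = (n - 2).choose (r / 2) := by
      rw [← count_avoid n (r / 2) hz ho]
      congr 1
      apply Finset.filter_congr
      intro v _
      constructor
      · rintro ⟨hc, hne⟩
        push_neg at hne
        exact ⟨hc, by simpa using hne.1, by simpa using hne.2⟩
      · rintro ⟨hc, h0, h1'⟩
        exact ⟨hc, by simp [h0, h1']⟩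
    rw [h1, h2] at hsplit
    exact Nat.eq_sub_of_add_eq hsplit
end

section
/- Let p and m be positive integers. Let (a, b) and (a', b') be antipodal pairs of sequences Fin p → Bool (i.e., a(i) ≠ b(i) and a'(i) ≠ b'(i) for all i), and suppose the pairs are distinct as unordered pairs, i.e., a ≠ a' and a ≠ b'. For s, t : Fin m → Bool, define v_s : Fin m × Fin p → Bool by v_s(j, i) = a(i) if s(j) = true and b(i) otherwise, and define u_t : Fin m × Fin p → Bool by u_t(j, i) = a'(i) if t(j) = true and b'(i) otherwise. Then the Hamming distance between v_s and u_t is at least m. -/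
/-- vertices built from distinct antipodal pairs `(a,b)` and `(a',b')`
(distinct as unordered pairs, i.e. `a ≠ a'` and `a ≠ b'`) are at Hamming distance
at least `m`. -/
theorem hammingDist_distinct_antipodal_pairs
    (p m : ℕ) (hp : 0 < p) (hm : 0 < m)
    (a b a' b' : Fin p → Bool)
    (hab : ∀ i, a i ≠ b i) (hab' : ∀ i, a' i ≠ b' i)
    (h1 : a ≠ a') (h2 : a ≠ b')
    (s t : Fin m → Bool) :
    m ≤ hammingDist
      (fun x : Fin m × Fin p => if s x.1 then a x.2 else b x.2)
      (fun x : Fin m × Fin p => if t x.1 then a' x.2 else b' x.2) := by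
  classical
  have h3 : b ≠ a' := by
    intro h
    apply h2
    funext i
    have h5 := hab i
    have h6 := hab' i
    have h7 := congrFun h i
    revert h5 h6 h7
    cases a i <;> cases b i <;> cases a' i <;> cases b' i <;> simp
  have h4 : b ≠ b' := by
    intro h
    apply h1
    funext i
    have h5 := hab i
    have h6 := hab' i
    have h7 := congrFun h i
    revert h5 h6 h7
    cases a i <;> cases b i <;> cases a' i <;> cases b' i <;> simp
  -- for each row j, there is a differing coordinate
  have key : ∀ j : Fin m, ∃ i : Fin p,
      (if s j then a i else b i) ≠ (if t j then a' i else b' i) := by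
    intro j
    cases hs : s j <;> cases ht : t j <;> simp only [hs, ht, Bool.false_eq_true, if_true, if_false]
    · exact Function.ne_iff.mp h4
    · exact Function.ne_iff.mp h3
    · exact Function.ne_iff.mp h2
    · exact Function.ne_iff.mp h1
  choose f hf using key
  unfold hammingDist
  calc m = (Finset.univ : Finset (Fin m)).card := by simp
    _ ≤ _ := by
        apply Finset.card_le_card_of_injOn (fun j => (j, f j))
        · intro j _
          simp only [Finset.mem_coe, Finset.mem_filter, Finset.mem_univ, true_and]
          exact hf j
        · intro x _ y _ h
          exact (Prod.mk.injEq _ _ _ _ ▸ h).1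
end

section
/- Let r be a positive even integer with r ≤ n. Then, as real numbers, √(C(n,r) · C(r,r/2) · C(n−r,r/2)) ≤ e^r · 2^(r/2) · (n/r)^(3r/4), where C(a,b) denotes the binomial coefficient and e is Euler's number. -/
/-- Bound `C(m,k) ≤ (e·m/k)^k` over the reals. -/
lemma choose_le_exp_pow (m k : ℕ) (hk : 0 < k) :
    (m.choose k : ℝ) ≤ (Real.exp 1 * m / k) ^ k := by
  have hkpos : (0:ℝ) < k := by exact_mod_cast hk
  have h1 : (m.choose k : ℝ) ≤ (m ^ k : ℝ) / k.factorial := by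
    exact_mod_cast Nat.choose_le_pow_div k m
  have h2 : ((k:ℝ)) ^ k / (k.factorial : ℝ) ≤ Real.exp k :=
    Real.pow_div_factorial_le_exp (k:ℝ) hkpos.le k
  have hfac : (0:ℝ) < (k.factorial : ℝ) := by exact_mod_cast Nat.factorial_pos k
  have h3 : ((k:ℝ)) ^ k ≤ Real.exp k * k.factorial := by
    rw [div_le_iff₀ hfac] at h2; exact h2
  have hexp : Real.exp (k:ℝ) = Real.exp 1 ^ k := by
    rw [Real.exp_one_pow]
  calc (m.choose k : ℝ) ≤ (m ^ k : ℝ) / k.factorial := h1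
    _ ≤ (Real.exp 1 * m / k) ^ k := by
        rw [div_pow, mul_pow, div_le_div_iff₀ hfac (by positivity)]
        calc (m:ℝ) ^ k * (k:ℝ) ^ k ≤ (m:ℝ) ^ k * (Real.exp k * k.factorial) := by gcongr
          _ = Real.exp 1 ^ k * (m:ℝ) ^ k * (k.factorial : ℝ) := by rw [hexp]; ring

/-- for positive even `r ≤ n`,
`√(C(n,r) · C(r,r/2) · C(n-r,r/2)) ≤ e^r · 2^(r/2) · (n/r)^(3r/4)` as real numbers. -/
theorem sqrt_triangle_count_upper_bound
    (n r : ℕ) (hr : 0 < r) (hre : Even r) (hrn : r ≤ n) :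
    Real.sqrt ((n.choose r : ℝ) * (r.choose (r / 2) : ℝ) * ((n - r).choose (r / 2) : ℝ))
      ≤ Real.exp r * 2 ^ (r / 2) * ((n : ℝ) / r) ^ (3 * (r : ℝ) / 4) := by
  obtain ⟨s, hs⟩ := hre
  have hrs : r = 2 * s := by omega
  subst hrs
  have hs0 : 0 < s := by omega
  have hspos : (0:ℝ) < s := by exact_mod_cast hs0
  have hnpos : (0:ℝ) < n := by
    have : 0 < n := by omega
    exact_mod_cast this
  have hdiv : (2 * s) / 2 = s := by omega
  rw [hdiv]
  set E := Real.exp 1 with hE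
  have hE2 : (2:ℝ) ≤ E := by
    have := Real.add_one_le_exp 1
    linarith
  have hEpos : (0:ℝ) < E := Real.exp_pos 1
  set N : ℝ := (n : ℝ) with hN
  set T : ℝ := Real.exp ((2 * s : ℕ) : ℝ) * 2 ^ s * (N / ((2 * s : ℕ) : ℝ)) ^ (3 * ((2 * s : ℕ) : ℝ) / 4)
    with hT
  have hcast : ((2 * s : ℕ) : ℝ) = 2 * (s : ℝ) := by push_cast; ring
  have hnr : (0:ℝ) < N / ((2 * s : ℕ) : ℝ) := by
    rw [hcast]; positivity
  have hTnn : 0 ≤ T := by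
    have h1 : (0:ℝ) ≤ (N / ((2 * s : ℕ) : ℝ)) ^ (3 * ((2 * s : ℕ) : ℝ) / 4) :=
      Real.rpow_nonneg hnr.le _
    have h2 : (0:ℝ) < Real.exp ((2 * s : ℕ) : ℝ) := Real.exp_pos _
    positivity
  rw [← Real.sqrt_sq hTnn]
  apply Real.sqrt_le_sqrt
  -- bound the three binomial coefficients
  have b1 : (n.choose (2 * s) : ℝ) ≤ (E * N / ((2 * s : ℕ) : ℝ)) ^ (2 * s) :=
    choose_le_exp_pow n (2 * s) hr
  have b2 : (((2 * s).choose s : ℕ) : ℝ) ≤ (2:ℝ) ^ (2 * s) := by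
    have h := Finset.single_le_sum (f := fun i => (2 * s).choose i)
      (fun i _ => Nat.zero_le _) (Finset.mem_range.2 (by omega : s < 2 * s + 1))
    rw [Nat.sum_range_choose] at h
    exact_mod_cast h
  have b3 : (((n - 2 * s).choose s : ℕ) : ℝ) ≤ (E * N / (s : ℝ)) ^ s := by
    calc (((n - 2 * s).choose s : ℕ) : ℝ) ≤ ((n.choose s : ℕ) : ℝ) := by
          exact_mod_cast Nat.choose_le_choose s (Nat.sub_le n (2 * s))
      _ ≤ (E * N / (s : ℝ)) ^ s := choose_le_exp_pow n s hs0
  have step1 : (n.choose (2 * s) : ℝ) * ((2 * s).choose s : ℝ) * ((n - 2 * s).choose s : ℝ)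
      ≤ (E * N / ((2 * s : ℕ) : ℝ)) ^ (2 * s) * (2:ℝ) ^ (2 * s) * (E * N / (s : ℝ)) ^ s := by
    gcongr <;> positivity
  refine step1.trans ?_
  -- rewrite T^2
  have hTsq : T ^ 2 = (E * N / (s : ℝ)) ^ (3 * s) * (E / 2) ^ s := by
    have hexp2 : Real.exp ((2 * s : ℕ) : ℝ) = E ^ (2 * s) := by
      rw [hE, Real.exp_one_pow]
    have hrpow : ((N / ((2 * s : ℕ) : ℝ)) ^ (3 * ((2 * s : ℕ) : ℝ) / 4)) ^ 2
        = (N / ((2 * s : ℕ) : ℝ)) ^ (3 * s : ℕ) := by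
      rw [← Real.rpow_natCast ((N / ((2 * s : ℕ) : ℝ)) ^ (3 * ((2 * s : ℕ) : ℝ) / 4)) 2,
        ← Real.rpow_mul hnr.le, ← Real.rpow_natCast (N / ((2 * s : ℕ) : ℝ)) (3 * s)]
      congr 1
      push_cast
      ring
    rw [hT, mul_pow, mul_pow, hrpow, hexp2, hcast]
    field_simp
    have key : (1/2:ℝ)^(s*3) * 2^(s*2) = (1/2)^s := by
      rw [show s*3 = s + s*2 by ring, pow_add, mul_assoc, ← mul_pow]; norm_num
    linear_combination (E ^ (s * 4) * N ^ (s * 3) * (↑s)⁻¹ ^ (s * 3)) * key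
  rw [hTsq]
  have hmain : (E * N / ((2 * s : ℕ) : ℝ)) ^ (2 * s) * (2:ℝ) ^ (2 * s) * (E * N / (s : ℝ)) ^ s
      = (E * N / (s : ℝ)) ^ (3 * s) := by
    rw [hcast]
    field_simp
    have key : (1/2:ℝ)^(s*2) * 2^(s*2) = 1 := by
      rw [← mul_pow]; norm_num
    linear_combination (E ^ (s * 3) * N ^ (s * 3) * (↑s)⁻¹ ^ (s * 3)) * key
  rw [hmain]
  have hone : (1:ℝ) ≤ (E / 2) ^ s := one_le_pow₀ (by linarith)
  exact le_mul_of_one_le_right (by positivity) hone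
end
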